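/- arXiv:2406.11365 — 4 statements merged into one kernel-verified Lean document; each statement's English description precedes it below -/
import Mathlib

section
/- The function S_n : ℝ × ℝⁿ → ℝ, defined by S_n(t,x) = (4πt)^(−n/2)·exp(−‖x‖²/(4t)) for t > 0 and S_n(t,x) = 0 for t ≤ 0, is of class C^∞ on the open set (ℝ × ℝⁿ) \ {(0,0)}. -/
open Real MeasureTheory

open Filter


noncomputable def fAux (c : ℝ) (t : ℝ) : ℝ :=
  if 0 < t then t ^ c * Real.exp (-t⁻¹) else 0

lemma fAux_tendsto (a : ℝ) :
    Tendsto (fun t : ℝ => t ^ a * Real.exp (-t⁻¹)) (nhdsWithin 0 (Set.Ioi 0)) (nhds 0) := by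
  have h := (tendsto_rpow_mul_exp_neg_mul_atTop_nhds_zero (-a) 1 one_pos).comp
    tendsto_inv_nhdsGT_zero
  refine h.congr' ?_
  filter_upwards [self_mem_nhdsWithin] with t (ht : 0 < t)
  simp only [Function.comp]
  rw [Real.rpow_neg (inv_nonneg.2 ht.le), Real.inv_rpow ht.le, inv_inv, neg_one_mul]

lemma fAux_hasDerivAt (c t : ℝ) :
    HasDerivAt (fAux c) (c * fAux (c - 1) t + fAux (c - 2) t) t := by
  rcases lt_trichotomy t 0 with ht | rfl | ht
  · have h0 : fAux (c - 1) t = 0 := if_neg (not_lt.2 ht.le)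
    have h1 : fAux (c - 2) t = 0 := if_neg (not_lt.2 ht.le)
    rw [h0, h1, mul_zero, zero_add]
    have : fAux c =ᶠ[nhds t] fun _ => (0 : ℝ) := by
      filter_upwards [IsOpen.mem_nhds isOpen_Iio ht] with s (hs : s < 0)
      exact if_neg (not_lt.2 hs.le)
    exact (hasDerivAt_const t (0:ℝ)).congr_of_eventuallyEq this
  · -- t = 0
    have h0 : fAux (c - 1) 0 = 0 := if_neg (lt_irrefl 0)
    have h1 : fAux (c - 2) 0 = 0 := if_neg (lt_irrefl 0)
    rw [h0, h1, mul_zero, zero_add]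
    rw [hasDerivAt_iff_tendsto_slope]
    have hslope : ∀ s : ℝ, slope (fAux c) 0 s = fAux (c - 1) s := by
      intro s
      simp only [slope_def_field, fAux, if_neg (lt_irrefl (0:ℝ)), sub_zero]
      rcases lt_or_ge 0 s with hs | hs
      · rw [if_pos hs, if_pos hs, div_eq_iff hs.ne', mul_assoc,
          mul_comm (Real.exp _) s, ← mul_assoc, ← Real.rpow_add_one hs.ne']
        ring_nf
      · rw [if_neg (not_lt.2 hs), if_neg (not_lt.2 hs), zero_div]
    simp only [funext hslope]
    rw [← nhdsLT_sup_nhdsGT (0:ℝ), tendsto_sup]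
    constructor
    · have : (fun s => fAux (c-1) s) =ᶠ[nhdsWithin 0 (Set.Iio 0)] fun _ => (0:ℝ) := by
        filter_upwards [self_mem_nhdsWithin] with s (hs : s < 0)
        exact if_neg (not_lt.2 hs.le)
      exact tendsto_const_nhds.congr' this.symm
    · refine (fAux_tendsto (c-1)).congr' ?_
      filter_upwards [self_mem_nhdsWithin] with s (hs : 0 < s)
      exact (if_pos hs).symm
  · -- t > 0
    have heq : fAux c =ᶠ[nhds t] fun s => s ^ c * Real.exp (-s⁻¹) := by
      filter_upwards [IsOpen.mem_nhds isOpen_Ioi ht] with s (hs : 0 < s)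
      exact if_pos hs
    have hd : HasDerivAt (fun s : ℝ => s ^ c * Real.exp (-s⁻¹))
        (c * (t ^ (c-1) * Real.exp (-t⁻¹)) + t ^ (c-2) * Real.exp (-t⁻¹)) t := by
      have h1 : HasDerivAt (fun s : ℝ => s ^ c) (c * t ^ (c - 1)) t :=
        Real.hasDerivAt_rpow_const (Or.inl ht.ne')
      have h2 : HasDerivAt (fun s : ℝ => Real.exp (-s⁻¹)) (Real.exp (-t⁻¹) * (t^2)⁻¹) t := by
        have hinv : HasDerivAt (fun s : ℝ => -s⁻¹) ((t^2)⁻¹) t := by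
          simpa [Pi.neg_def] using ((hasDerivAt_inv ht.ne').neg)
        simpa [Function.comp_def] using (Real.hasDerivAt_exp (-t⁻¹)).comp t hinv
      have : HasDerivAt (fun s : ℝ => s ^ c * Real.exp (-s⁻¹)) _ t := h1.mul h2
      convert this using 1
      have ht2 : t ^ (c - 2) = t ^ c * (t^2)⁻¹ := by
        rw [← Real.rpow_natCast t 2, ← Real.rpow_neg ht.le, ← Real.rpow_add ht]
        norm_num [sub_eq_add_neg]
      rw [ht2]; ring
    refine HasDerivAt.congr_of_eventuallyEq ?_ heq
    have e1 : fAux (c-1) t = t ^ (c-1) * Real.exp (-t⁻¹) := if_pos ht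
    have e2 : fAux (c-2) t = t ^ (c-2) * Real.exp (-t⁻¹) := if_pos ht
    rw [e1, e2]
    exact hd

lemma fAux_contDiff (m : ℕ) : ∀ c, ContDiff ℝ (m : ℕ∞) (fAux c) := by
  induction m with
  | zero =>
    intro c
    have hd : Differentiable ℝ (fAux c) := fun x => (fAux_hasDerivAt c x).differentiableAt
    exact_mod_cast contDiff_zero.2 hd.continuous
  | succ m ih =>
    intro c
    have hd : Differentiable ℝ (fAux c) := fun x => (fAux_hasDerivAt c x).differentiableAt
    have hderiv : deriv (fAux c) = fun t => c * fAux (c - 1) t + fAux (c - 2) t :=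
      funext fun t => (fAux_hasDerivAt c t).deriv
    have : ContDiff ℝ ((m : ℕ∞) + 1) (fAux c) := by
      refine contDiff_succ_iff_deriv.2 ⟨hd, by simp, ?_⟩
      rw [hderiv]
      exact (contDiff_const.mul (ih (c - 1))).add (ih (c - 2))
    exact_mod_cast this

lemma fAux_contDiff_top (c : ℝ) : ContDiff ℝ ((⊤ : ℕ∞) : WithTop ℕ∞) (fAux c) := by
  rw [contDiff_infty]
  exact fun m => fAux_contDiff m c

/-- The fundamental solution of the heat equation in `ℝⁿ`. -/
noncomputable def Sn (n : ℕ) (t : ℝ) (x : EuclideanSpace ℝ (Fin n)) : ℝ :=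
  if 0 < t then (4 * Real.pi * t) ^ (-(n : ℝ) / 2) * Real.exp (-‖x‖ ^ 2 / (4 * t)) else 0

/-- The fundamental solution `S_n` is of class `C^∞` on `(ℝ × ℝⁿ) \ {(0,0)}`. -/
theorem Sn_contDiffOn (n : ℕ) (hn : 2 ≤ n) :
    ContDiffOn ℝ (⊤ : ℕ∞) (fun p : ℝ × EuclideanSpace ℝ (Fin n) => Sn n p.1 p.2)
      {p : ℝ × EuclideanSpace ℝ (Fin n) | p ≠ (0, 0)} := by
  intro p hp
  apply ContDiffAt.contDiffWithinAt
  set a : ℝ := -(n : ℝ) / 2 with ha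
  by_cases hx : p.2 ≠ 0
  · -- x ≠ 0 case
    have hmem : {q : ℝ × EuclideanSpace ℝ (Fin n) | q.2 ≠ 0} ∈ nhds p :=
      (isOpen_compl_singleton.preimage continuous_snd).mem_nhds hx
    have hF : ContDiffAt ℝ ((⊤ : ℕ∞) : WithTop ℕ∞)
        (fun q : ℝ × EuclideanSpace ℝ (Fin n) =>
          Real.pi ^ a * (‖q.2‖ ^ 2) ^ a * fAux a (4 * q.1 / ‖q.2‖ ^ 2)) p := by
      have hnsq : ContDiffAt ℝ ((⊤ : ℕ∞) : WithTop ℕ∞)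
          (fun q : ℝ × EuclideanSpace ℝ (Fin n) => ‖q.2‖ ^ 2) p :=
        ((contDiff_norm_sq ℝ).comp contDiff_snd).contDiffAt
      have hnsq0 : (‖p.2‖ : ℝ) ^ 2 ≠ 0 := pow_ne_zero 2 (norm_ne_zero_iff.mpr hx)
      refine ContDiffAt.mul (ContDiffAt.mul contDiffAt_const ?_) ?_
      · exact (Real.contDiffAt_rpow_const_of_ne hnsq0).comp p hnsq
      · refine (fAux_contDiff_top a).contDiffAt.comp p ?_
        exact ((contDiff_const.mul contDiff_fst).contDiffAt).div hnsq hnsq0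
    refine hF.congr_of_eventuallyEq ?_
    filter_upwards [hmem] with q (hq : q.2 ≠ 0)
    have hr : (0:ℝ) < ‖q.2‖ ^ 2 := pow_pos (norm_pos_iff.mpr hq) 2
    show Sn n q.1 q.2 = _
    unfold Sn fAux
    by_cases ht : 0 < q.1
    · rw [if_pos ht, if_pos (div_pos (by linarith) hr)]
      have harg : -(4 * q.1 / ‖q.2‖ ^ 2)⁻¹ = -‖q.2‖ ^ 2 / (4 * q.1) := by
        rw [inv_div, neg_div]
      have hpow : Real.pi ^ a * (‖q.2‖ ^ 2) ^ a * (4 * q.1 / ‖q.2‖ ^ 2) ^ a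
          = (4 * Real.pi * q.1) ^ a := by
        rw [← Real.mul_rpow Real.pi_pos.le hr.le,
          ← Real.mul_rpow (by positivity) (by positivity)]
        congr 1
        field_simp
      rw [harg, ← mul_assoc, hpow]
    · rw [if_neg ht, if_neg (not_lt.2 (div_nonpos_of_nonpos_of_nonneg (by linarith) hr.le)),
        mul_zero]
  · push_neg at hx
    have ht0 : p.1 ≠ 0 := by
      intro h
      exact hp (by rw [Set.mem_setOf_eq] at *; exact absurd (Prod.ext h hx) (by exact hp))
    rcases ht0.lt_or_gt with ht | ht
    · -- t < 0 : locally zero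
      have hmem : {q : ℝ × EuclideanSpace ℝ (Fin n) | q.1 < 0} ∈ nhds p :=
        (isOpen_Iio.preimage continuous_fst).mem_nhds ht
      refine contDiffAt_const (c := (0:ℝ)) |>.congr_of_eventuallyEq ?_
      filter_upwards [hmem] with q (hq : q.1 < 0)
      show Sn n q.1 q.2 = 0
      exact if_neg (not_lt.2 hq.le)
    · -- t > 0
      have hmem : {q : ℝ × EuclideanSpace ℝ (Fin n) | 0 < q.1} ∈ nhds p :=
        (isOpen_Ioi.preimage continuous_fst).mem_nhds ht
      have hG : ContDiffAt ℝ ((⊤ : ℕ∞) : WithTop ℕ∞)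
          (fun q : ℝ × EuclideanSpace ℝ (Fin n) =>
            (4 * Real.pi * q.1) ^ a * Real.exp (-‖q.2‖ ^ 2 / (4 * q.1))) p := by
        have hbase : ContDiffAt ℝ ((⊤ : ℕ∞) : WithTop ℕ∞)
            (fun q : ℝ × EuclideanSpace ℝ (Fin n) => 4 * Real.pi * q.1) p :=
          (contDiff_const.mul contDiff_fst).contDiffAt
        have hb0 : 4 * Real.pi * p.1 ≠ 0 := by positivity
        refine ContDiffAt.mul (ContDiffAt.comp (g := fun x : ℝ => x ^ a) p (Real.contDiffAt_rpow_const_of_ne hb0) hbase) ?_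
        refine Real.contDiff_exp.contDiffAt.comp p ?_
        exact (((contDiff_norm_sq ℝ).comp contDiff_snd).neg.contDiffAt).div
          ((contDiff_const.mul contDiff_fst).contDiffAt) (by positivity)
      refine hG.congr_of_eventuallyEq ?_
      filter_upwards [hmem] with q (hq : 0 < q.1)
      show Sn n q.1 q.2 = _
      exact if_pos hq
end

section
/- Assume σ is upper (n−1)-Ahlfors regular with constant c. Then for every (t,x) ∈ [0,T] × ℝⁿ the integral defining v[μ](t,x) converges absolutely, and the single layer heat potential v[μ] is bounded and continuous on all of [0,T] × ℝⁿ (including across the support K), with v[μ](0,x) = 0 for every x ∈ ℝⁿ. -/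
open Real MeasureTheory Set Filter Topology

/-- The single layer heat potential `v[μ](t,x) = ∫₀ᵗ ∫ S_n(t−τ, x−y) μ(τ,y) dσ(y) dτ`. -/
noncomputable def singleLayer (n : ℕ) (σ : Measure (EuclideanSpace ℝ (Fin n)))
    (μ : ℝ → EuclideanSpace ℝ (Fin n) → ℝ) (t : ℝ) (x : EuclideanSpace ℝ (Fin n)) : ℝ :=
  ∫ τ in Set.Ioc (0 : ℝ) t, ∫ y, Sn n (t - τ) (x - y) * μ τ y ∂σ

namespace SLaux

lemma Sn_nonneg (n : ℕ) (t : ℝ) (x : EuclideanSpace ℝ (Fin n)) : 0 ≤ Sn n t x := by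
  unfold Sn
  split
  · have : (0:ℝ) < 4 * Real.pi * t := by positivity
    positivity
  · exact le_refl 0

lemma Sn_zero (n : ℕ) {t : ℝ} (h : t ≤ 0) (x : EuclideanSpace ℝ (Fin n)) : Sn n t x = 0 := by
  unfold Sn; rw [if_neg (by linarith)]

lemma rpow_neg_half_of_nonpos {x : ℝ} (h : x ≤ 0) : x ^ (-(1:ℝ)/2) = 0 := by
  rcases lt_or_eq_of_le h with h | h
  · rw [Real.rpow_def_of_neg h]
    have : Real.cos (-(1:ℝ)/2 * π) = 0 := by
      rw [show (-(1:ℝ)/2 * π) = -(π/2) by ring, Real.cos_neg, Real.cos_pi_div_two]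
    rw [this, mul_zero]
  · rw [h, Real.zero_rpow (by norm_num)]

lemma sqrt_sub_le_sqrt {u v : ℝ} (hu : 0 ≤ u) (huv : u ≤ v) : √v - √u ≤ √(v - u) := by
  have h1 : √v ≤ √u + √(v - u) := by
    have ha := Real.sqrt_nonneg u
    have hb := Real.sqrt_nonneg (v - u)
    have ha2 : √u ^ 2 = u := Real.sq_sqrt hu
    have hb2 : √(v - u) ^ 2 = v - u := Real.sq_sqrt (by linarith)
    have : √v ≤ √((√u + √(v - u)) ^ 2) := Real.sqrt_le_sqrt (by nlinarith)
    rwa [Real.sqrt_sq (by linarith)] at this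
  linarith

/-- integrability of `τ ↦ (t - τ) ^ (-1/2)` on any `Ioc a b` -/

lemma integrableOn_shift_rpow (t a b : ℝ) :
    IntegrableOn (fun τ : ℝ => (t - τ) ^ (-(1:ℝ)/2)) (Ioc a b) volume := by
  rcases le_total a b with hab | hab
  · have h1 : IntervalIntegrable (fun s : ℝ => s ^ (-(1:ℝ)/2)) volume (t - a) (t - b) :=
      intervalIntegral.intervalIntegrable_rpow' (by norm_num)
    have h2 := h1.comp_sub_left t
    simp only [sub_sub_cancel] at h2
    rw [intervalIntegrable_iff_integrableOn_Ioc_of_le hab] at h2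
    exact h2
  · rw [Set.Ioc_eq_empty (by exact fun h => absurd hab (not_le.2 h))]
    exact integrableOn_empty

/-- the key calculus bound -/

lemma integral_shift_rpow_le (t a b : ℝ) (hab : a ≤ b) :
    ∫ τ in Ioc a b, (t - τ) ^ (-(1:ℝ)/2) ≤ 2 * √(b - a) := by
  set u := t - b with hu
  set v := t - a with hv
  have huv : u ≤ v := by rw [hu, hv]; linarith
  have key : ∫ τ in Ioc a b, (t - τ) ^ (-(1:ℝ)/2) = ∫ s in Ioc u v, s ^ (-(1:ℝ)/2) := by
    rw [← intervalIntegral.integral_of_le hab, ← intervalIntegral.integral_of_le huv]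
    rw [intervalIntegral.integral_comp_sub_left (fun s : ℝ => s ^ (-(1:ℝ)/2)) t]
  rw [key]
  have hvu : v - u = b - a := by rw [hu, hv]; ring
  rcases le_or_gt v 0 with hv0 | hv0
  · have : ∫ s in Ioc u v, s ^ (-(1:ℝ)/2) = 0 := by
      rw [setIntegral_congr_fun measurableSet_Ioc
        (fun s hs => rpow_neg_half_of_nonpos (le_trans hs.2 hv0))]
      simp
    rw [this]; positivity
  · set u' := max u 0 with hu'
    have hu'0 : 0 ≤ u' := le_max_right _ _
    have hu'v : u' ≤ v := max_le huv hv0.le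
    have hsplit : Ioc u v = Ioc u u' ∪ Ioc u' v := (Ioc_union_Ioc_eq_Ioc (le_max_left _ _) hu'v).symm
    have hint1 : IntegrableOn (fun s : ℝ => s ^ (-(1:ℝ)/2)) (Ioc u u') volume := by
      have := intervalIntegral.intervalIntegrable_rpow' (a := u) (b := u') (r := -(1:ℝ)/2) (by norm_num)
      rwa [intervalIntegrable_iff_integrableOn_Ioc_of_le (le_max_left _ _)] at this
    have hint2 : IntegrableOn (fun s : ℝ => s ^ (-(1:ℝ)/2)) (Ioc u' v) volume := by
      have := intervalIntegral.intervalIntegrable_rpow' (a := u') (b := v) (r := -(1:ℝ)/2) (by norm_num)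
      rwa [intervalIntegrable_iff_integrableOn_Ioc_of_le hu'v] at this
    have hzero : ∫ s in Ioc u u', s ^ (-(1:ℝ)/2) = 0 := by
      rcases le_or_gt u 0 with h | h
      · rw [setIntegral_congr_fun measurableSet_Ioc
          (fun s hs => rpow_neg_half_of_nonpos (le_trans hs.2 (by simp [hu', h])))]
        simp
      · rw [show u' = u by simp [hu', h.le], Set.Ioc_self]; simp
    have hcalc : ∫ s in Ioc u' v, s ^ (-(1:ℝ)/2) = 2 * √v - 2 * √u' := by
      rw [← intervalIntegral.integral_of_le hu'v]
      rw [integral_rpow (Or.inl (by norm_num))]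
      have h12 : (-(1:ℝ)/2 + 1) = 1/2 := by norm_num
      rw [h12, Real.sqrt_eq_rpow, Real.sqrt_eq_rpow]
      ring
    rw [hsplit, setIntegral_union (Ioc_disjoint_Ioc_of_le le_rfl) measurableSet_Ioc hint1 hint2,
      hzero, zero_add, hcalc]
    have h1 : √v - √u' ≤ √(v - u') := sqrt_sub_le_sqrt hu'0 hu'v
    have huu' : u ≤ u' := le_max_left u 0
    have h2 : √(v - u') ≤ √(v - u) := Real.sqrt_le_sqrt (by linarith)
    rw [hvu] at h2
    linarith

lemma measurable_Sn (n : ℕ) : Measurable fun p : ℝ × EuclideanSpace ℝ (Fin n) => Sn n p.1 p.2 := by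
  unfold Sn
  apply Measurable.ite (measurableSet_lt measurable_const measurable_fst)
  · fun_prop
  · exact measurable_const

lemma continuousAt_Sn (n : ℕ) {q : ℝ × EuclideanSpace ℝ (Fin n)} (h : 0 < q.1) :
    ContinuousAt (fun p : ℝ × EuclideanSpace ℝ (Fin n) => Sn n p.1 p.2) q := by
  have hopen : IsOpen {p : ℝ × EuclideanSpace ℝ (Fin n) | 0 < p.1} :=
    isOpen_lt continuous_const continuous_fst
  have hev : ∀ᶠ p in 𝓝 q, (fun p : ℝ × EuclideanSpace ℝ (Fin n) =>
      (4 * π * p.1) ^ (-(n : ℝ) / 2) * Real.exp (-‖p.2‖ ^ 2 / (4 * p.1))) p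
      = Sn n p.1 p.2 := by
    filter_upwards [hopen.mem_nhds h] with p hp
    unfold Sn; rw [if_pos hp]
  apply ContinuousAt.congr _ hev
  have h1 : ContinuousAt (fun p : ℝ × EuclideanSpace ℝ (Fin n) => (4 * π * p.1) ^ (-(n : ℝ) / 2)) q := by
    apply ContinuousAt.rpow_const (by fun_prop)
    left; positivity
  apply h1.mul
  apply (Real.continuous_exp.continuousAt).comp
  apply ContinuousAt.div (by fun_prop) (by fun_prop)
  positivity

lemma Sn_le (n : ℕ) {s s' : ℝ} (h0 : 0 < s') (hss : s' ≤ s) (x : EuclideanSpace ℝ (Fin n)) :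
    Sn n s x ≤ (4 * π * s') ^ (-(n : ℝ) / 2) := by
  have hs : 0 < s := lt_of_lt_of_le h0 hss
  unfold Sn; rw [if_pos hs]
  have h1 : Real.exp (-‖x‖ ^ 2 / (4 * s)) ≤ 1 := by
    rw [show (1:ℝ) = Real.exp 0 by rw [Real.exp_zero]]
    apply Real.exp_le_exp.2
    exact div_nonpos_of_nonpos_of_nonneg (neg_nonpos.2 (by positivity)) (by positivity)
  calc (4 * π * s) ^ (-(n : ℝ) / 2) * Real.exp (-‖x‖ ^ 2 / (4 * s))
      ≤ (4 * π * s) ^ (-(n : ℝ) / 2) * 1 := by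
        apply mul_le_mul_of_nonneg_left h1
        positivity
    _ ≤ (4 * π * s') ^ (-(n : ℝ) / 2) := by
        rw [mul_one]
        apply Real.rpow_le_rpow_of_nonpos (by positivity) (by nlinarith [Real.pi_pos]) (by
          have : (0:ℝ) ≤ (n:ℝ) := Nat.cast_nonneg n
          linarith)

lemma rpow_helper {n : ℕ} (hn : 2 ≤ n) {s : ℝ} (hs : 0 < s) :
    s ^ (-(n:ℝ)/2) * (√s) ^ (n - 1) = s ^ (-(1:ℝ)/2) := by
  have h1 : ((√s : ℝ)) ^ (n - 1) = s ^ ((1/2 : ℝ) * ((n:ℝ) - 1)) := by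
    rw [Real.sqrt_eq_rpow, ← Real.rpow_natCast (s ^ ((1:ℝ)/2)) (n-1), ← Real.rpow_mul hs.le]
    congr 1
    rw [Nat.cast_sub (by omega), Nat.cast_one]
  rw [h1, ← Real.rpow_add hs]
  congr 1
  ring

noncomputable def gaussSum (n : ℕ) : ℝ := ∑' k : ℕ, ((k:ℝ)+1) ^ (n-1) * Real.exp (-(k:ℝ)^2/4)

lemma summable_gauss (n : ℕ) :
    Summable (fun k : ℕ => ((k:ℝ)+1) ^ (n-1) * Real.exp (-(k:ℝ)^2/4)) := by
  set r : ℝ := Real.exp (-(1:ℝ)/4) with hr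
  have hr0 : 0 < r := Real.exp_pos _
  have hr1 : ‖r‖ < 1 := by
    rw [Real.norm_eq_abs, abs_of_pos hr0, hr]
    exact Real.exp_lt_one_iff.2 (by norm_num)
  have hgeom : Summable (fun k : ℕ => (k:ℝ) ^ (n-1) * r ^ k) :=
    summable_pow_mul_geometric_of_norm_lt_one (n-1) hr1
  have hshift : Summable (fun k : ℕ => ((k+1:ℕ):ℝ) ^ (n-1) * r ^ (k+1)) :=
    hgeom.comp_injective Nat.succ_injective
  have hshift' : Summable (fun k : ℕ => r⁻¹ * (((k+1:ℕ):ℝ) ^ (n-1) * r ^ (k+1))) :=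
    hshift.mul_left _
  apply Summable.of_nonneg_of_le (fun k => by positivity) _ hshift'
  intro k
  have h1 : Real.exp (-(k:ℝ)^2/4) ≤ r ^ k := by
    rw [hr, ← Real.exp_nat_mul]
    apply Real.exp_le_exp.2
    have hk : (k:ℝ) ≤ (k:ℝ)^2 := by
      rcases Nat.eq_zero_or_pos k with h | h
      · simp [h]
      · have : (1:ℝ) ≤ (k:ℝ) := by exact_mod_cast h
        nlinarith
    nlinarith
  have h2 : r⁻¹ * (((k+1:ℕ):ℝ) ^ (n-1) * r ^ (k+1)) = ((k:ℝ)+1) ^ (n-1) * r ^ k := by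
    push_cast
    field_simp
    ring
  rw [h2]
  apply mul_le_mul_of_nonneg_left h1 (by positivity)

lemma gaussSum_nonneg (n : ℕ) : 0 ≤ gaussSum n :=
  tsum_nonneg (fun k => by positivity)

lemma gauss_lintegral_le {n : ℕ} (σ : Measure (EuclideanSpace ℝ (Fin n)))
    {c : ℝ} (hc : 0 < c)
    (hA : ∀ (x : EuclideanSpace ℝ (Fin n)) (r : ℝ), 0 < r →
      σ (Metric.closedBall x r) ≤ ENNReal.ofReal (c * r ^ (n - 1)))
    (x : EuclideanSpace ℝ (Fin n)) {s : ℝ} (hs : 0 < s) :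
    ∫⁻ y, ENNReal.ofReal (Real.exp (-‖x - y‖ ^ 2 / (4*s))) ∂σ
      ≤ ENNReal.ofReal (c * gaussSum n * (√s) ^ (n-1)) := by
  have hss : 0 < √s := Real.sqrt_pos.2 hs
  set A : ℕ → Set (EuclideanSpace ℝ (Fin n)) :=
    fun k => Metric.ball x (((k:ℝ)+1) * √s) \ Metric.ball x ((k:ℝ) * √s) with hA'
  have hcover : (univ : Set (EuclideanSpace ℝ (Fin n))) ⊆ ⋃ k, A k := by
    intro y _
    set d := dist y x with hd
    have hd0 : 0 ≤ d := dist_nonneg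
    set k := ⌊d / √s⌋₊ with hk
    have h1 : (k:ℝ) ≤ d / √s := Nat.floor_le (by positivity)
    have h2 : d / √s < (k:ℝ) + 1 := Nat.lt_floor_add_one _
    refine mem_iUnion.2 ⟨k, Metric.mem_ball.2 ?_, ?_⟩
    · rw [← hd]; rw [div_lt_iff₀ hss] at h2; linarith
    · simp only [Metric.mem_ball, not_lt]
      rw [le_div_iff₀ hss] at h1
      rw [← hd]; linarith
  calc ∫⁻ y, ENNReal.ofReal (Real.exp (-‖x - y‖ ^ 2 / (4*s))) ∂σ
      = ∫⁻ y in univ, ENNReal.ofReal (Real.exp (-‖x - y‖ ^ 2 / (4*s))) ∂σ := by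
        rw [setLIntegral_univ]
    _ ≤ ∫⁻ y in ⋃ k, A k, ENNReal.ofReal (Real.exp (-‖x - y‖ ^ 2 / (4*s))) ∂σ :=
        lintegral_mono_set hcover
    _ ≤ ∑' k : ℕ, ∫⁻ y in A k, ENNReal.ofReal (Real.exp (-‖x - y‖ ^ 2 / (4*s))) ∂σ :=
        lintegral_iUnion_le _ _
    _ ≤ ∑' k : ℕ, ENNReal.ofReal (Real.exp (-(k:ℝ)^2/4)) * σ (A k) := by
        apply ENNReal.tsum_le_tsum
        intro k
        calc ∫⁻ y in A k, ENNReal.ofReal (Real.exp (-‖x - y‖ ^ 2 / (4*s))) ∂σ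
            ≤ ∫⁻ _ in A k, ENNReal.ofReal (Real.exp (-(k:ℝ)^2/4)) ∂σ := by
              apply setLIntegral_mono measurable_const
              intro y hy
              apply ENNReal.ofReal_le_ofReal
              apply Real.exp_le_exp.2
              have hdist : (k:ℝ) * √s ≤ dist y x := by
                have := hy.2
                simpa [Metric.mem_ball, not_lt] using this
              have hnorm : ‖x - y‖ = dist y x := by
                rw [dist_comm, dist_eq_norm]
              have hsq : ((k:ℝ) * √s)^2 ≤ ‖x - y‖^2 := by
                rw [hnorm]
                apply sq_le_sq' (by nlinarith [dist_nonneg (x := y) (y := x)]) hdist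
              rw [div_le_div_iff₀ (by linarith) (by norm_num)]
              have hexp : ((k:ℝ) * √s)^2 = (k:ℝ)^2 * s := by
                rw [mul_pow, Real.sq_sqrt hs.le]
              nlinarith
          _ = ENNReal.ofReal (Real.exp (-(k:ℝ)^2/4)) * σ (A k) := setLIntegral_const _ _
    _ ≤ ∑' k : ℕ, ENNReal.ofReal (Real.exp (-(k:ℝ)^2/4)) * ENNReal.ofReal (c * (((k:ℝ)+1) * √s) ^ (n-1)) := by
        apply ENNReal.tsum_le_tsum
        intro k
        apply mul_le_mul_right _ _
        calc σ (A k) ≤ σ (Metric.closedBall x (((k:ℝ)+1) * √s)) := by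
              apply measure_mono
              exact (diff_subset).trans Metric.ball_subset_closedBall
          _ ≤ ENNReal.ofReal (c * (((k:ℝ)+1) * √s) ^ (n-1)) := hA x _ (by positivity)
    _ = ∑' k : ℕ, ENNReal.ofReal (Real.exp (-(k:ℝ)^2/4) * (c * (((k:ℝ)+1) * √s) ^ (n-1))) := by
        congr 1; funext k
        rw [← ENNReal.ofReal_mul (Real.exp_nonneg _)]
    _ = ENNReal.ofReal (∑' k : ℕ, Real.exp (-(k:ℝ)^2/4) * (c * (((k:ℝ)+1) * √s) ^ (n-1))) := by
        rw [ENNReal.ofReal_tsum_of_nonneg (fun k => by positivity)]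
        have : (fun k : ℕ => Real.exp (-(k:ℝ)^2/4) * (c * (((k:ℝ)+1) * √s) ^ (n-1)))
            = fun k : ℕ => (c * (√s)^(n-1)) * (((k:ℝ)+1) ^ (n-1) * Real.exp (-(k:ℝ)^2/4)) := by
          funext k; rw [mul_pow]; ring
        rw [this]
        exact (summable_gauss n).mul_left _
    _ = ENNReal.ofReal (c * gaussSum n * (√s) ^ (n-1)) := by
        congr 1
        have : (fun k : ℕ => Real.exp (-(k:ℝ)^2/4) * (c * (((k:ℝ)+1) * √s) ^ (n-1)))
            = fun k : ℕ => (c * (√s)^(n-1)) * (((k:ℝ)+1) ^ (n-1) * Real.exp (-(k:ℝ)^2/4)) := by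
          funext k; rw [mul_pow]; ring
        rw [this, tsum_mul_left]
        unfold gaussSum
        ring

noncomputable def Cg (n : ℕ) (c : ℝ) : ℝ := (4 * π) ^ (-(n:ℝ)/2) * (c * gaussSum n)

lemma Cg_nonneg (n : ℕ) {c : ℝ} (hc : 0 ≤ c) : 0 ≤ Cg n c :=
  mul_nonneg (Real.rpow_nonneg (by positivity) _) (mul_nonneg hc (gaussSum_nonneg n))

variable {n : ℕ} {σ : Measure (EuclideanSpace ℝ (Fin n))} {c : ℝ}

lemma Sn_lintegral_le (hn : 2 ≤ n) (hc : 0 < c)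
    (hA : ∀ (x : EuclideanSpace ℝ (Fin n)) (r : ℝ), 0 < r →
      σ (Metric.closedBall x r) ≤ ENNReal.ofReal (c * r ^ (n - 1)))
    (x : EuclideanSpace ℝ (Fin n)) {s : ℝ} (hs : 0 < s) :
    ∫⁻ y, ENNReal.ofReal (Sn n s (x - y)) ∂σ ≤ ENNReal.ofReal (Cg n c * s ^ (-(1:ℝ)/2)) := by
  have hK : (0:ℝ) < (4 * π * s) ^ (-(n : ℝ) / 2) := by
    apply Real.rpow_pos_of_pos; positivity
  have hSn : ∀ y : EuclideanSpace ℝ (Fin n),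
      Sn n s (x - y) = (4 * π * s) ^ (-(n : ℝ) / 2) * Real.exp (-‖x - y‖ ^ 2 / (4 * s)) := by
    intro y; unfold Sn; rw [if_pos hs]
  calc ∫⁻ y, ENNReal.ofReal (Sn n s (x - y)) ∂σ
      = ∫⁻ y, ENNReal.ofReal ((4 * π * s) ^ (-(n : ℝ) / 2)) *
          ENNReal.ofReal (Real.exp (-‖x - y‖ ^ 2 / (4 * s))) ∂σ := by
        apply lintegral_congr; intro y
        rw [hSn y, ENNReal.ofReal_mul hK.le]
    _ = ENNReal.ofReal ((4 * π * s) ^ (-(n : ℝ) / 2)) *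
          ∫⁻ y, ENNReal.ofReal (Real.exp (-‖x - y‖ ^ 2 / (4 * s))) ∂σ := by
        apply lintegral_const_mul
        apply ENNReal.measurable_ofReal.comp
        fun_prop
    _ ≤ ENNReal.ofReal ((4 * π * s) ^ (-(n : ℝ) / 2)) *
          ENNReal.ofReal (c * gaussSum n * (√s) ^ (n-1)) := by
        apply mul_le_mul_right
        exact gauss_lintegral_le σ hc hA x hs
    _ = ENNReal.ofReal (Cg n c * s ^ (-(1:ℝ)/2)) := by
        rw [← ENNReal.ofReal_mul hK.le]
        congr 1
        have h4 : (4 * π * s) ^ (-(n : ℝ) / 2) = (4 * π) ^ (-(n:ℝ)/2) * s ^ (-(n:ℝ)/2) :=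
          Real.mul_rpow (by positivity) hs.le
        rw [h4, Cg]
        have h5 := rpow_helper hn hs
        rw [← h5]; ring

variable {μ : ℝ → EuclideanSpace ℝ (Fin n) → ℝ} {M : ℝ}

lemma lintegral_norm_le (hn : 2 ≤ n) (hc : 0 < c)
    (hA : ∀ (x : EuclideanSpace ℝ (Fin n)) (r : ℝ), 0 < r →
      σ (Metric.closedBall x r) ≤ ENNReal.ofReal (c * r ^ (n - 1)))
    (hμbd : ∀ t x, |μ t x| ≤ M) (t : ℝ) (x : EuclideanSpace ℝ (Fin n)) (τ : ℝ) :
    ∫⁻ y, ENNReal.ofReal ‖Sn n (t - τ) (x - y) * μ τ y‖ ∂σ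
      ≤ ENNReal.ofReal (M * Cg n c * (t - τ) ^ (-(1:ℝ)/2)) := by
  have hM : 0 ≤ M := le_trans (abs_nonneg _) (hμbd 0 0)
  rcases le_or_gt (t - τ) 0 with h | h
  · have : ∀ y : EuclideanSpace ℝ (Fin n), ‖Sn n (t - τ) (x - y) * μ τ y‖ = 0 := by
      intro y; rw [Sn_zero n h, zero_mul, norm_zero]
    simp only [this, ENNReal.ofReal_zero, lintegral_zero]
    exact zero_le
  · calc ∫⁻ y, ENNReal.ofReal ‖Sn n (t - τ) (x - y) * μ τ y‖ ∂σ
        ≤ ∫⁻ y, ENNReal.ofReal (Sn n (t - τ) (x - y)) * ENNReal.ofReal M ∂σ := by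
          apply lintegral_mono; intro y
          dsimp only
          rw [← ENNReal.ofReal_mul (Sn_nonneg n _ _)]
          apply ENNReal.ofReal_le_ofReal
          rw [norm_mul, Real.norm_eq_abs, Real.norm_eq_abs, abs_of_nonneg (Sn_nonneg n _ _)]
          exact mul_le_mul_of_nonneg_left (hμbd τ y) (Sn_nonneg n _ _)
      _ = (∫⁻ y, ENNReal.ofReal (Sn n (t - τ) (x - y)) ∂σ) * ENNReal.ofReal M := by
          apply lintegral_mul_const
          apply ENNReal.measurable_ofReal.comp
          exact (measurable_Sn n).comp (measurable_const.prodMk (measurable_const.sub measurable_id))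
      _ ≤ ENNReal.ofReal (Cg n c * (t - τ) ^ (-(1:ℝ)/2)) * ENNReal.ofReal M :=
          mul_le_mul_left (Sn_lintegral_le hn hc hA x h) _
      _ = ENNReal.ofReal (M * Cg n c * (t - τ) ^ (-(1:ℝ)/2)) := by
          rw [← ENNReal.ofReal_mul (mul_nonneg (Cg_nonneg n hc.le) (Real.rpow_nonneg h.le _))]
          congr 1; ring

/-- The inner integral of the single layer potential. -/
noncomputable def Fker (n : ℕ) (σ : Measure (EuclideanSpace ℝ (Fin n)))
    (μ : ℝ → EuclideanSpace ℝ (Fin n) → ℝ) (t : ℝ) (x : EuclideanSpace ℝ (Fin n)) (τ : ℝ) : ℝ :=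
  ∫ y, Sn n (t - τ) (x - y) * μ τ y ∂σ

lemma Fker_eq_zero (h : t ≤ τ) (x : EuclideanSpace ℝ (Fin n)) : Fker n σ μ t x τ = 0 := by
  unfold Fker
  have : ∀ y : EuclideanSpace ℝ (Fin n), Sn n (t - τ) (x - y) * μ τ y = 0 := by
    intro y; rw [Sn_zero n (by linarith), zero_mul]
  simp only [this, integral_zero]

lemma norm_Fker_le (hn : 2 ≤ n) (hc : 0 < c)
    (hA : ∀ (x : EuclideanSpace ℝ (Fin n)) (r : ℝ), 0 < r →
      σ (Metric.closedBall x r) ≤ ENNReal.ofReal (c * r ^ (n - 1)))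
    (hμbd : ∀ t x, |μ t x| ≤ M) (t : ℝ) (x : EuclideanSpace ℝ (Fin n)) (τ : ℝ) :
    ‖Fker n σ μ t x τ‖ ≤ M * Cg n c * (t - τ) ^ (-(1:ℝ)/2) := by
  have hM : 0 ≤ M := le_trans (abs_nonneg _) (hμbd 0 0)
  rcases le_or_gt t τ with h | h
  · rw [Fker_eq_zero h, norm_zero, rpow_neg_half_of_nonpos (by linarith), mul_zero]
  · calc ‖Fker n σ μ t x τ‖
        ≤ (∫⁻ y, ENNReal.ofReal ‖Sn n (t - τ) (x - y) * μ τ y‖ ∂σ).toReal :=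
          norm_integral_le_lintegral_norm _
      _ ≤ M * Cg n c * (t - τ) ^ (-(1:ℝ)/2) := by
          apply ENNReal.toReal_le_of_le_ofReal
          · exact mul_nonneg (mul_nonneg hM (Cg_nonneg n hc.le)) (Real.rpow_nonneg (by linarith) _)
          · exact lintegral_norm_le hn hc hA hμbd t x τ

lemma measurable_Fker [SFinite σ] (hμmeas : Measurable (Function.uncurry μ)) (t : ℝ)
    (x : EuclideanSpace ℝ (Fin n)) :
    StronglyMeasurable (fun τ => Fker n σ μ t x τ) := by
  have hm : StronglyMeasurable (fun p : ℝ × EuclideanSpace ℝ (Fin n) =>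
      Sn n (t - p.1) (x - p.2) * μ p.1 p.2) := by
    apply Measurable.stronglyMeasurable
    apply Measurable.mul
    · exact (measurable_Sn n).comp ((measurable_const.sub measurable_fst).prodMk
        (measurable_const.sub measurable_snd))
    · exact hμmeas
  exact hm.integral_prod_right'

lemma integrableOn_Fker [SFinite σ] (hn : 2 ≤ n) (hc : 0 < c)
    (hA : ∀ (x : EuclideanSpace ℝ (Fin n)) (r : ℝ), 0 < r →
      σ (Metric.closedBall x r) ≤ ENNReal.ofReal (c * r ^ (n - 1)))
    (hμmeas : Measurable (Function.uncurry μ)) (hμbd : ∀ t x, |μ t x| ≤ M)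
    (t : ℝ) (x : EuclideanSpace ℝ (Fin n)) (a b : ℝ) :
    IntegrableOn (fun τ => Fker n σ μ t x τ) (Ioc a b) volume := by
  have hM : 0 ≤ M := le_trans (abs_nonneg _) (hμbd 0 0)
  apply Integrable.mono' (((integrableOn_shift_rpow t a b).const_mul (M * Cg n c)))
  · exact ((measurable_Fker hμmeas t x).aestronglyMeasurable).restrict
  · apply ae_of_all
    intro τ
    exact norm_Fker_le hn hc hA hμbd t x τ

lemma tail_bound [SFinite σ] (hn : 2 ≤ n) (hc : 0 < c)
    (hA : ∀ (x : EuclideanSpace ℝ (Fin n)) (r : ℝ), 0 < r →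
      σ (Metric.closedBall x r) ≤ ENNReal.ofReal (c * r ^ (n - 1)))
    (hμmeas : Measurable (Function.uncurry μ)) (hμbd : ∀ t x, |μ t x| ≤ M)
    (t : ℝ) (x : EuclideanSpace ℝ (Fin n)) {a b : ℝ} (hab : a ≤ b) :
    ‖∫ τ in Ioc a b, Fker n σ μ t x τ‖ ≤ M * Cg n c * (2 * √(b - a)) := by
  have hM : 0 ≤ M := le_trans (abs_nonneg _) (hμbd 0 0)
  have hMC : 0 ≤ M * Cg n c := mul_nonneg hM (Cg_nonneg n hc.le)
  calc ‖∫ τ in Ioc a b, Fker n σ μ t x τ‖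
      ≤ ∫ τ in Ioc a b, ‖Fker n σ μ t x τ‖ := norm_integral_le_integral_norm _
    _ ≤ ∫ τ in Ioc a b, M * Cg n c * (t - τ) ^ (-(1:ℝ)/2) := by
        apply integral_mono ((integrableOn_Fker hn hc hA hμmeas hμbd t x a b).norm)
          ((integrableOn_shift_rpow t a b).const_mul (M * Cg n c))
        intro τ
        exact norm_Fker_le hn hc hA hμbd t x τ
    _ = (M * Cg n c) * ∫ τ in Ioc a b, (t - τ) ^ (-(1:ℝ)/2) := integral_const_mul _ _
    _ ≤ M * Cg n c * (2 * √(b - a)) := by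
        apply mul_le_mul_of_nonneg_left (integral_shift_rpow_le t a b hab) hMC

lemma extend_domain [SFinite σ] (hn : 2 ≤ n) (hc : 0 < c)
    (hA : ∀ (x : EuclideanSpace ℝ (Fin n)) (r : ℝ), 0 < r →
      σ (Metric.closedBall x r) ≤ ENNReal.ofReal (c * r ^ (n - 1)))
    (hμmeas : Measurable (Function.uncurry μ)) (hμbd : ∀ t x, |μ t x| ≤ M)
    {t b : ℝ} (htb : t ≤ b) (x : EuclideanSpace ℝ (Fin n)) :
    ∫ τ in Ioc 0 t, Fker n σ μ t x τ = ∫ τ in Ioc 0 b, Fker n σ μ t x τ := by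
  rcases le_or_gt t 0 with h | h
  · rw [Set.Ioc_eq_empty (by exact fun hh => absurd h (not_le.2 hh))]
    rw [Measure.restrict_empty, integral_zero_measure]
    rw [setIntegral_congr_fun measurableSet_Ioc
      (fun τ hτ => Fker_eq_zero (le_trans h hτ.1.le) x)]
    simp
  · rw [← Ioc_union_Ioc_eq_Ioc h.le htb,
      setIntegral_union (Ioc_disjoint_Ioc_of_le le_rfl) measurableSet_Ioc
        (integrableOn_Fker hn hc hA hμmeas hμbd t x 0 t)
        (integrableOn_Fker hn hc hA hμmeas hμbd t x t b)]
    rw [setIntegral_congr_fun measurableSet_Ioc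
      (fun τ hτ => Fker_eq_zero hτ.1.le x), integral_zero, add_zero]

variable [IsFiniteMeasure σ]
lemma continuousAt_Fker [IsFiniteMeasure σ]
    (hμmeas : Measurable (Function.uncurry μ)) (hμbd : ∀ t x, |μ t x| ≤ M)
    {τ : ℝ} {p₀ : ℝ × EuclideanSpace ℝ (Fin n)} (hτ : τ < p₀.1) :
    ContinuousAt (fun p : ℝ × EuclideanSpace ℝ (Fin n) => Fker n σ μ p.1 p.2 τ) p₀ := by
  have hM : 0 ≤ M := le_trans (abs_nonneg _) (hμbd 0 0)
  set δ := (p₀.1 - τ) / 2 with hδ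
  have hδ0 : 0 < δ := by rw [hδ]; linarith
  have hopen : IsOpen {p : ℝ × EuclideanSpace ℝ (Fin n) | δ < p.1 - τ} := by
    apply isOpen_lt continuous_const (by fun_prop)
  have hmem : p₀ ∈ {p : ℝ × EuclideanSpace ℝ (Fin n) | δ < p.1 - τ} := by
    simp only [mem_setOf_eq, hδ]; linarith
  apply continuousAt_of_dominated (bound := fun _ => (4 * π * δ) ^ (-(n : ℝ) / 2) * M)
  · apply Eventually.of_forall
    intro p
    apply Measurable.aestronglyMeasurable
    apply Measurable.mul
    · exact (measurable_Sn n).comp (measurable_const.prodMk (measurable_const.sub measurable_id))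
    · exact hμmeas.comp (measurable_const.prodMk measurable_id)
  · filter_upwards [hopen.mem_nhds hmem] with p hp
    apply ae_of_all
    intro y
    rw [norm_mul, Real.norm_eq_abs, Real.norm_eq_abs, abs_of_nonneg (Sn_nonneg n _ _)]
    apply mul_le_mul (Sn_le n hδ0 (le_of_lt hp) _) (hμbd τ y) (abs_nonneg _)
      (Real.rpow_nonneg (by positivity) _)
  · exact integrable_const _
  · apply ae_of_all
    intro y
    apply ContinuousAt.mul _ continuousAt_const
    have h1 : ContinuousAt (fun q : ℝ × EuclideanSpace ℝ (Fin n) => Sn n q.1 q.2)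
        (p₀.1 - τ, p₀.2 - y) := continuousAt_Sn n (by simpa using hτ)
    have h2 : ContinuousAt (fun p : ℝ × EuclideanSpace ℝ (Fin n) => (p.1 - τ, p.2 - y)) p₀ := by
      fun_prop
    exact ContinuousAt.comp (f := fun p : ℝ × EuclideanSpace ℝ (Fin n) => (p.1 - τ, p.2 - y)) h1 h2

lemma continuousAt_truncated (hn : 2 ≤ n) (hc : 0 < c)
    (hA : ∀ (x : EuclideanSpace ℝ (Fin n)) (r : ℝ), 0 < r →
      σ (Metric.closedBall x r) ≤ ENNReal.ofReal (c * r ^ (n - 1)))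
    (hμmeas : Measurable (Function.uncurry μ)) (hμbd : ∀ t x, |μ t x| ≤ M)
    (p₀ : ℝ × EuclideanSpace ℝ (Fin n)) {d : ℝ} (hd : 0 < d) :
    ContinuousAt (fun p : ℝ × EuclideanSpace ℝ (Fin n) =>
      ∫ τ in Ioc 0 (p₀.1 - d), Fker n σ μ p.1 p.2 τ) p₀ := by
  have hM : 0 ≤ M := le_trans (abs_nonneg _) (hμbd 0 0)
  have hopen : IsOpen {p : ℝ × EuclideanSpace ℝ (Fin n) | p₀.1 - d/2 < p.1} :=
    isOpen_lt continuous_const continuous_fst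
  have hmem : p₀ ∈ {p : ℝ × EuclideanSpace ℝ (Fin n) | p₀.1 - d/2 < p.1} := by
    simp only [mem_setOf_eq]; linarith
  apply continuousAt_of_dominated (bound := fun _ => M * Cg n c * (d/2) ^ (-(1:ℝ)/2))
  · apply Eventually.of_forall
    intro p
    exact ((measurable_Fker hμmeas p.1 p.2).aestronglyMeasurable).restrict
  · filter_upwards [hopen.mem_nhds hmem] with p hp
    rw [ae_restrict_iff' measurableSet_Ioc]
    apply ae_of_all
    intro τ hτ
    calc ‖Fker n σ μ p.1 p.2 τ‖ ≤ M * Cg n c * (p.1 - τ) ^ (-(1:ℝ)/2) :=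
          norm_Fker_le hn hc hA hμbd p.1 p.2 τ
      _ ≤ M * Cg n c * (d/2) ^ (-(1:ℝ)/2) := by
          apply mul_le_mul_of_nonneg_left _ (mul_nonneg hM (Cg_nonneg n hc.le))
          apply Real.rpow_le_rpow_of_nonpos (by linarith) _ (by norm_num)
          have := hτ.2
          linarith [hp]
  · exact integrableOn_const measure_Ioc_lt_top.ne
  · rw [ae_restrict_iff' measurableSet_Ioc]
    apply ae_of_all
    intro τ hτ
    exact continuousAt_Fker hμmeas hμbd (by have := hτ.2; linarith)

lemma continuousAt_v (hn : 2 ≤ n) (hc : 0 < c)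
    (hA : ∀ (x : EuclideanSpace ℝ (Fin n)) (r : ℝ), 0 < r →
      σ (Metric.closedBall x r) ≤ ENNReal.ofReal (c * r ^ (n - 1)))
    (hμmeas : Measurable (Function.uncurry μ)) (hμbd : ∀ t x, |μ t x| ≤ M)
    (p₀ : ℝ × EuclideanSpace ℝ (Fin n)) :
    ContinuousAt (fun p : ℝ × EuclideanSpace ℝ (Fin n) =>
      ∫ τ in Ioc 0 p.1, Fker n σ μ p.1 p.2 τ) p₀ := by
  have hM : 0 ≤ M := le_trans (abs_nonneg _) (hμbd 0 0)
  have hMC : 0 ≤ M * Cg n c := mul_nonneg hM (Cg_nonneg n hc.le)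
  rw [Metric.continuousAt_iff]
  intro ε hε
  set B := M * Cg n c with hB
  set e := ε / (6 * (2 * B + 1)) with he
  have he0 : 0 < e := by apply div_pos hε; positivity
  set d := e^2 / 2 with hd
  have hd0 : 0 < d := by positivity
  -- tail estimate
  have hsq : √(2 * d) = e := by
    rw [hd, show 2 * (e^2/2) = e^2 by ring, Real.sqrt_sq he0.le]
  have htail : ∀ p : ℝ × EuclideanSpace ℝ (Fin n), |p.1 - p₀.1| ≤ d →
      ‖(∫ τ in Ioc 0 p.1, Fker n σ μ p.1 p.2 τ)
        - ∫ τ in Ioc 0 (p₀.1 - d), Fker n σ μ p.1 p.2 τ‖ ≤ B * (2 * e) := by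
    intro p hp
    have hple : p.1 ≤ p₀.1 + d := by cases abs_le.1 hp; linarith
    have hext := extend_domain hn hc hA hμmeas hμbd (t := p.1) (b := p₀.1 + d) hple p.2
    rw [hext]
    have hbound : ∀ u v : ℝ, u ≤ v → v - u ≤ 2 * d →
        ‖∫ τ in Ioc u v, Fker n σ μ p.1 p.2 τ‖ ≤ B * (2 * e) := by
      intro u v huv hvu
      calc ‖∫ τ in Ioc u v, Fker n σ μ p.1 p.2 τ‖
          ≤ B * (2 * √(v - u)) := tail_bound hn hc hA hμmeas hμbd p.1 p.2 huv
        _ ≤ B * (2 * e) := by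
            apply mul_le_mul_of_nonneg_left _ hMC
            have : √(v - u) ≤ √(2*d) := Real.sqrt_le_sqrt (by linarith)
            rw [hsq] at this
            linarith
    rcases le_or_gt 0 (p₀.1 - d) with h0 | h0
    · have hsplit : Ioc 0 (p₀.1 + d) = Ioc 0 (p₀.1 - d) ∪ Ioc (p₀.1 - d) (p₀.1 + d) :=
        (Ioc_union_Ioc_eq_Ioc h0 (by linarith)).symm
      rw [hsplit, setIntegral_union (Ioc_disjoint_Ioc_of_le le_rfl) measurableSet_Ioc
        (integrableOn_Fker hn hc hA hμmeas hμbd p.1 p.2 0 (p₀.1 - d))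
        (integrableOn_Fker hn hc hA hμmeas hμbd p.1 p.2 (p₀.1 - d) (p₀.1 + d))]
      rw [add_sub_cancel_left]
      exact hbound _ _ (by linarith) (by ring_nf; linarith)
    · rw [show Ioc (0:ℝ) (p₀.1 - d) = ∅ from Set.Ioc_eq_empty (not_lt.2 h0.le),
        Measure.restrict_empty, integral_zero_measure, sub_zero]
      rcases le_or_gt (p₀.1 + d) 0 with h1 | h1
      · rw [show Ioc (0:ℝ) (p₀.1 + d) = ∅ from Set.Ioc_eq_empty (not_lt.2 h1),
          Measure.restrict_empty, integral_zero_measure]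
        simp only [norm_zero]
        positivity
      · exact hbound 0 (p₀.1 + d) h1.le (by linarith)
  -- continuity of truncation
  have hw := continuousAt_truncated hn hc hA hμmeas hμbd p₀ hd0
  rw [Metric.continuousAt_iff] at hw
  obtain ⟨δ₁, hδ₁, hw⟩ := hw (ε/3) (by positivity)
  refine ⟨min δ₁ d, lt_min hδ₁ hd0, ?_⟩
  intro p hpd
  have hp1 : dist p p₀ < δ₁ := lt_of_lt_of_le hpd (min_le_left _ _)
  have hp2 : |p.1 - p₀.1| ≤ d := by
    have : dist p.1 p₀.1 ≤ dist p p₀ := by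
      rw [Prod.dist_eq]; exact le_max_left _ _
    rw [Real.dist_eq] at this
    linarith [lt_of_lt_of_le hpd (min_le_right _ _)]
  have h1 := htail p hp2
  have h2 := htail p₀ (by simp [hd0.le])
  have h3 := hw hp1
  rw [Real.dist_eq]
  rw [Real.dist_eq] at h3
  have h6 : (2 * B + 1) * e = ε / 6 := by
    rw [he]; field_simp
  have hBe : B * (2 * e) ≤ ε / 3 := by nlinarith [he0.le]
  have habs1 : |(∫ τ in Ioc 0 p.1, Fker n σ μ p.1 p.2 τ)
      - ∫ τ in Ioc 0 (p₀.1 - d), Fker n σ μ p.1 p.2 τ| ≤ ε / 3 := le_trans h1 hBe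
  have habs2 : |(∫ τ in Ioc 0 p₀.1, Fker n σ μ p₀.1 p₀.2 τ)
      - ∫ τ in Ioc 0 (p₀.1 - d), Fker n σ μ p₀.1 p₀.2 τ| ≤ ε / 3 := le_trans h2 hBe
  have t1 := abs_sub_le (∫ τ in Ioc 0 p.1, Fker n σ μ p.1 p.2 τ)
    (∫ τ in Ioc 0 (p₀.1 - d), Fker n σ μ p.1 p.2 τ)
    (∫ τ in Ioc 0 p₀.1, Fker n σ μ p₀.1 p₀.2 τ)
  have t2 := abs_sub_le (∫ τ in Ioc 0 (p₀.1 - d), Fker n σ μ p.1 p.2 τ)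
    (∫ τ in Ioc 0 (p₀.1 - d), Fker n σ μ p₀.1 p₀.2 τ)
    (∫ τ in Ioc 0 p₀.1, Fker n σ μ p₀.1 p₀.2 τ)
  rw [abs_sub_comm] at habs2
  linarith

lemma integrable_prod_layer [IsFiniteMeasure σ] (hn : 2 ≤ n) (hc : 0 < c)
    (hA : ∀ (x : EuclideanSpace ℝ (Fin n)) (r : ℝ), 0 < r →
      σ (Metric.closedBall x r) ≤ ENNReal.ofReal (c * r ^ (n - 1)))
    (hμmeas : Measurable (Function.uncurry μ)) (hμbd : ∀ t x, |μ t x| ≤ M)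
    (t : ℝ) (x : EuclideanSpace ℝ (Fin n)) :
    IntegrableOn (fun p : ℝ × EuclideanSpace ℝ (Fin n) => Sn n (t - p.1) (x - p.2) * μ p.1 p.2)
      (Set.Ioc (0 : ℝ) t ×ˢ (Set.univ : Set (EuclideanSpace ℝ (Fin n))))
      ((volume : Measure ℝ).prod σ) := by
  have hmeas : Measurable (fun p : ℝ × EuclideanSpace ℝ (Fin n) =>
      Sn n (t - p.1) (x - p.2) * μ p.1 p.2) := by
    apply Measurable.mul
    · exact (measurable_Sn n).comp ((measurable_const.sub measurable_fst).prodMk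
        (measurable_const.sub measurable_snd))
    · exact hμmeas
  rw [IntegrableOn, ← Measure.prod_restrict, Measure.restrict_univ]
  constructor
  · exact hmeas.aestronglyMeasurable
  · rw [hasFiniteIntegral_iff_norm]
    have hmeas2 : AEMeasurable (fun p : ℝ × EuclideanSpace ℝ (Fin n) =>
        ENNReal.ofReal ‖Sn n (t - p.1) (x - p.2) * μ p.1 p.2‖)
        ((volume.restrict (Set.Ioc (0:ℝ) t)).prod σ) :=
      (ENNReal.measurable_ofReal.comp hmeas.norm).aemeasurable
    rw [lintegral_prod _ hmeas2]
    calc ∫⁻ τ in Set.Ioc (0:ℝ) t, ∫⁻ y, ENNReal.ofReal ‖Sn n (t - τ) (x - y) * μ τ y‖ ∂σ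
        ≤ ∫⁻ τ in Set.Ioc (0:ℝ) t, ENNReal.ofReal (M * Cg n c * (t - τ) ^ (-(1:ℝ)/2)) := by
          apply lintegral_mono
          intro τ
          exact lintegral_norm_le hn hc hA hμbd t x τ
      _ < ⊤ := ((integrableOn_shift_rpow t 0 t).const_mul (M * Cg n c)).lintegral_lt_top

end SLaux

/-- If `σ` is upper `(n−1)`-Ahlfors regular, then the single layer heat potential is given by an
absolutely convergent integral at every point of `[0,T] × ℝⁿ`, it is bounded and continuous on
all of `[0,T] × ℝⁿ` (including across the support `K`), and it vanishes at `t = 0`. -/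
theorem singleLayer_continuous_everywhere (n : ℕ) (hn : 2 ≤ n) (T : ℝ) (hT : 0 < T)
    (σ : Measure (EuclideanSpace ℝ (Fin n))) [IsFiniteMeasure σ]
    (K : Set (EuclideanSpace ℝ (Fin n))) (hK : IsCompact K)
    (hKsupp : K = {x | ∀ U : Set (EuclideanSpace ℝ (Fin n)), IsOpen U → x ∈ U → σ U ≠ 0})
    (μ : ℝ → EuclideanSpace ℝ (Fin n) → ℝ)
    (hμmeas : Measurable (Function.uncurry μ))
    (M : ℝ) (hμbd : ∀ t x, |μ t x| ≤ M)
    (c : ℝ) (hc : 0 < c)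
    (hAhlfors : ∀ (x : EuclideanSpace ℝ (Fin n)) (r : ℝ), 0 < r →
      σ (Metric.closedBall x r) ≤ ENNReal.ofReal (c * r ^ (n - 1))) :
    (∀ t ∈ Set.Icc (0 : ℝ) T, ∀ x : EuclideanSpace ℝ (Fin n),
      IntegrableOn
        (fun p : ℝ × EuclideanSpace ℝ (Fin n) => Sn n (t - p.1) (x - p.2) * μ p.1 p.2)
        (Set.Ioc (0 : ℝ) t ×ˢ (Set.univ : Set (EuclideanSpace ℝ (Fin n))))
        ((volume : Measure ℝ).prod σ)) ∧
    (∃ C : ℝ, ∀ t ∈ Set.Icc (0 : ℝ) T, ∀ x : EuclideanSpace ℝ (Fin n),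
      |singleLayer n σ μ t x| ≤ C) ∧
    ContinuousOn (fun p : ℝ × EuclideanSpace ℝ (Fin n) => singleLayer n σ μ p.1 p.2)
      (Set.Icc (0 : ℝ) T ×ˢ (Set.univ : Set (EuclideanSpace ℝ (Fin n)))) ∧
    (∀ x : EuclideanSpace ℝ (Fin n), singleLayer n σ μ 0 x = 0) := by
  have hM : 0 ≤ M := le_trans (abs_nonneg _) (hμbd 0 0)
  refine ⟨?_, ⟨M * SLaux.Cg n c * (2 * √T), ?_⟩, ?_, ?_⟩
  · intro t ht x
    exact SLaux.integrable_prod_layer hn hc hAhlfors hμmeas hμbd t x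
  · intro t ht x
    have h1 : |singleLayer n σ μ t x| = ‖∫ τ in Set.Ioc (0:ℝ) t, SLaux.Fker n σ μ t x τ‖ := by
      rw [Real.norm_eq_abs]; rfl
    rw [h1]
    calc ‖∫ τ in Set.Ioc (0:ℝ) t, SLaux.Fker n σ μ t x τ‖
        ≤ M * SLaux.Cg n c * (2 * √(t - 0)) := SLaux.tail_bound hn hc hAhlfors hμmeas hμbd t x ht.1
      _ ≤ M * SLaux.Cg n c * (2 * √T) := by
          apply mul_le_mul_of_nonneg_left _ (mul_nonneg hM (SLaux.Cg_nonneg n hc.le))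
          have : √(t - 0) ≤ √T := Real.sqrt_le_sqrt (by linarith [ht.2])
          linarith
  · apply Continuous.continuousOn
    apply continuous_iff_continuousAt.2
    intro p₀
    exact SLaux.continuousAt_v hn hc hAhlfors hμmeas hμbd p₀
  · intro x
    unfold singleLayer
    rw [Set.Ioc_self, Measure.restrict_empty, integral_zero_measure]
end

section
/- Assume σ is upper (n−1)-Ahlfors regular with constant c. Then there exists a constant C > 0, depending only on n and c, such that the single layer heat potential satisfies the parabolic Hölder estimate in time |v[μ](t₁,x) − v[μ](t₂,x)| ≤ C·(sup |μ|)·|t₁ − t₂|^{1/2} for all t₁, t₂ ∈ [0,T] and all x ∈ ℝⁿ. -/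
open Real MeasureTheory

open Set

noncomputable def heatK (n : ℕ) (r : ℝ) (s : ℝ) : ℝ :=
  (4 * Real.pi * s) ^ (-(n:ℝ) / 2) * Real.exp (-r / (4 * s))

noncomputable def heatK' (n : ℕ) (r : ℝ) (s : ℝ) : ℝ :=
  4 * Real.pi * (-(n:ℝ)/2) * (4*Real.pi*s) ^ (-(n:ℝ)/2 - 1) * Real.exp (-r/(4*s))
  + (4*Real.pi*s) ^ (-(n:ℝ)/2) * (Real.exp (-r/(4*s)) * ((-r/4) * -((s^2)⁻¹)))

lemma Sn_eq {n : ℕ} {s : ℝ} (hs : 0 < s) (z : EuclideanSpace ℝ (Fin n)) :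
    Sn n s z = heatK n (‖z‖^2) s := by
  simp [Sn, heatK, if_pos hs]

lemma Sn_nonneg (n : ℕ) (s : ℝ) (z : EuclideanSpace ℝ (Fin n)) : 0 ≤ Sn n s z := by
  unfold Sn; split
  · positivity
  · exact le_refl _

lemma u_exp_le (u : ℝ) (hu : 0 ≤ u) : u * Real.exp (-(u/2)) ≤ 1 := by
  have h := Real.add_one_le_exp (u/4)
  have hsq : (u/4+1)*(u/4+1) ≤ Real.exp (u/4) * Real.exp (u/4) :=
    mul_le_mul (by linarith) (by linarith) (by positivity) (Real.exp_pos _).le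
  rw [← Real.exp_add] at hsq
  have h2 : u ≤ Real.exp (u/2) := by
    have : u/4 + u/4 = u/2 := by ring
    rw [this] at hsq
    nlinarith [sq_nonneg (u/4 - 1)]
  rw [Real.exp_neg, mul_inv_le_iff₀ (Real.exp_pos _)]
  simpa using h2

lemma heatK_hasDerivAt {n : ℕ} {r s : ℝ} (hs : 0 < s) :
    HasDerivAt (heatK n r) (heatK' n r s) s := by
  have h4s : (0:ℝ) < 4 * Real.pi * s := by positivity
  have h1 : HasDerivAt (fun u : ℝ => 4 * Real.pi * u) (4 * Real.pi) s := by
    simpa using (hasDerivAt_id s).const_mul (4 * Real.pi)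
  have h2 : HasDerivAt (fun u : ℝ => (4 * Real.pi * u) ^ (-(n:ℝ)/2))
      (4 * Real.pi * (-(n:ℝ)/2) * (4 * Real.pi * s) ^ (-(n:ℝ)/2 - 1)) s :=
    h1.rpow_const (Or.inl h4s.ne')
  have h3 : HasDerivAt (fun u : ℝ => -r / (4 * u)) ((-r/4) * -((s^2)⁻¹)) s := by
    have hinv : HasDerivAt (fun u : ℝ => u⁻¹) (-((s^2)⁻¹)) s := by
      simpa using hasDerivAt_inv hs.ne'
    have h := hinv.const_mul (-r/4)
    have heq : (fun u : ℝ => -r/4 * u⁻¹) = (fun u : ℝ => -r / (4 * u)) := by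
      funext u; ring
    rwa [heq] at h
  have h4 : HasDerivAt (fun u : ℝ => Real.exp (-r / (4 * u)))
      (Real.exp (-r / (4 * s)) * ((-r/4) * -((s^2)⁻¹))) s := h3.exp
  have := h2.mul h4
  unfold heatK heatK'
  exact this

lemma heatK'_bound {n : ℕ} {r s : ℝ} (hs : 0 < s) (hr : 0 ≤ r) :
    |heatK' n r s| ≤ ((n:ℝ)/2 + 1) * (4*Real.pi)^(-(n:ℝ)/2) * s ^ (-(n:ℝ)/2 - 1)
      * Real.exp (-r/(8*s)) := by
  have h4s : (0:ℝ) < 4 * Real.pi * s := by positivity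
  have hq : (4*Real.pi*s) ^ (-(n:ℝ)/2) = (4*Real.pi) ^ (-(n:ℝ)/2) * s ^ (-(n:ℝ)/2) :=
    Real.mul_rpow (by positivity) hs.le
  have hq1 : (4*Real.pi*s) ^ (-(n:ℝ)/2 - 1) = (4*Real.pi) ^ (-(n:ℝ)/2 - 1) * s ^ (-(n:ℝ)/2 - 1) :=
    Real.mul_rpow (by positivity) hs.le
  have hu0 : 0 ≤ r / (4*s) := by positivity
  set u : ℝ := r / (4*s) with hu
  -- rewrite heatK' as a product
  have hrw : heatK' n r s =
      (4*Real.pi) ^ (-(n:ℝ)/2) * s ^ (-(n:ℝ)/2 - 1) * Real.exp (-(r/(4*s))) * (-(n:ℝ)/2 + r/(4*s)) := by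
    unfold heatK'
    rw [hq, hq1]
    have e1 : (4*Real.pi) ^ (-(n:ℝ)/2 - 1) = (4*Real.pi) ^ (-(n:ℝ)/2) * (4*Real.pi)⁻¹ := by
      rw [Real.rpow_sub (by positivity), Real.rpow_one]; ring
    have e2 : s ^ (-(n:ℝ)/2) = s ^ (-(n:ℝ)/2 - 1) * s := by
      rw [Real.rpow_sub hs, Real.rpow_one]
      field_simp
    have e3 : -r / (4*s) = -(r/(4*s)) := by ring
    rw [e1, e2, e3]
    have hπ : (4*Real.pi) ≠ 0 := by positivity
    have hs2 : (s:ℝ)^2 ≠ 0 := by positivity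
    field_simp
  rw [hrw, show -(r/(4*s)) = -u from by rw [hu], show r/(4*s) = u from hu.symm]
  have hexp : Real.exp (-u) * |(-(n:ℝ)/2 + u)| ≤ ((n:ℝ)/2 + 1) * Real.exp (-(u/2)) := by
    have hn0 : (0:ℝ) ≤ (n:ℝ) := Nat.cast_nonneg n
    have habs : |(-(n:ℝ)/2 + u)| ≤ (n:ℝ)/2 + u := by
      rw [abs_le]; constructor <;> linarith
    have hsplit : Real.exp (-u) = Real.exp (-(u/2)) * Real.exp (-(u/2)) := by
      rw [← Real.exp_add]; ring_nf
    calc Real.exp (-u) * |(-(n:ℝ)/2 + u)| ≤ Real.exp (-u) * ((n:ℝ)/2 + u) := by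
          apply mul_le_mul_of_nonneg_left habs (Real.exp_pos _).le
      _ = ((n:ℝ)/2) * Real.exp (-u) + u * Real.exp (-u) := by ring
      _ ≤ ((n:ℝ)/2) * Real.exp (-(u/2)) + 1 * Real.exp (-(u/2)) := by
          apply add_le_add
          · apply mul_le_mul_of_nonneg_left _ (by positivity)
            apply Real.exp_le_exp.mpr; linarith
          · rw [hsplit, one_mul]
            calc u * (Real.exp (-(u/2)) * Real.exp (-(u/2)))
                = (u * Real.exp (-(u/2))) * Real.exp (-(u/2)) := by ring
              _ ≤ 1 * Real.exp (-(u/2)) := by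
                  apply mul_le_mul_of_nonneg_right (u_exp_le u hu0) (Real.exp_pos _).le
              _ = Real.exp (-(u/2)) := one_mul _
      _ = ((n:ℝ)/2 + 1) * Real.exp (-(u/2)) := by ring
  have hpos1 : 0 < (4*Real.pi) ^ (-(n:ℝ)/2) := by positivity
  have hpos2 : 0 < s ^ (-(n:ℝ)/2 - 1) := Real.rpow_pos_of_pos hs _
  have husval : -(u/2) = -r/(8*s) := by rw [hu]; ring
  rw [abs_mul, abs_mul, abs_mul, abs_of_pos hpos1, abs_of_pos hpos2,
    abs_of_pos (Real.exp_pos _)]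
  calc (4*Real.pi) ^ (-(n:ℝ)/2) * s ^ (-(n:ℝ)/2 - 1) * Real.exp (-u) * |(-(n:ℝ)/2 + u)|
      ≤ (4*Real.pi) ^ (-(n:ℝ)/2) * s ^ (-(n:ℝ)/2 - 1) * (((n:ℝ)/2 + 1) * Real.exp (-(u/2))) := by
        rw [mul_assoc]
        apply mul_le_mul_of_nonneg_left _ (by positivity)
        exact hexp
    _ = ((n:ℝ)/2 + 1) * (4*Real.pi)^(-(n:ℝ)/2) * s ^ (-(n:ℝ)/2 - 1) * Real.exp (-r/(8*s)) := by
        rw [husval]; ring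

noncomputable def An (n : ℕ) : ℝ := 2 * ((n:ℝ) - 1) ^ (((n:ℝ) - 1) / 2)

lemma An_pos {n : ℕ} (hn : 2 ≤ n) : 0 < An n := by
  have h2 : (2:ℝ) ≤ (n:ℝ) := by exact_mod_cast hn
  have := Real.rpow_pos_of_pos (by linarith : (0:ℝ) < (n:ℝ) - 1) (((n:ℝ) - 1) / 2)
  unfold An; positivity

lemma exp_lintegral_bound {n : ℕ} (hn : 2 ≤ n) {c : ℝ} (hc : 0 < c)
    (σ : Measure (EuclideanSpace ℝ (Fin n)))
    (hA : ∀ (x : EuclideanSpace ℝ (Fin n)) (r : ℝ), 0 < r →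
        σ (Metric.closedBall x r) ≤ ENNReal.ofReal (c * r ^ (n - 1)))
    (x : EuclideanSpace ℝ (Fin n)) {R : ℝ} (hR : 0 < R) :
    ∫⁻ y, ENNReal.ofReal (Real.exp (-‖x - y‖^2 / R)) ∂σ ≤
      ENNReal.ofReal (An n * c * R ^ (((n:ℝ) - 1) / 2)) := by
  set p : ℝ := ((n:ℝ) - 1) / 2 with hp
  have h2 : (2:ℝ) ≤ (n:ℝ) := by exact_mod_cast hn
  have hn1 : (1:ℝ) ≤ (n:ℝ) - 1 := by linarith
  have hppos : 0 < p := by rw [hp]; linarith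
  have hmeas : Measurable fun y : EuclideanSpace ℝ (Fin n) =>
      Real.exp (-‖x - y‖^2 / R) := by fun_prop
  rw [lintegral_eq_lintegral_meas_lt σ
    (Filter.Eventually.of_forall fun y => (Real.exp_pos _).le) hmeas.aemeasurable]
  have key : ∀ t ∈ Ioi (0:ℝ), σ {y | t < Real.exp (-‖x - y‖^2 / R)} ≤
      (Ioo (0:ℝ) 1).indicator
        (fun t => ENNReal.ofReal ((c * ((n:ℝ)-1) ^ p * R ^ p) * t ^ (-(1:ℝ)/2))) t := by
    intro t ht
    rcases le_or_gt 1 t with h1 | h1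
    · have hempty : {y | t < Real.exp (-‖x - y‖^2 / R)} = ∅ := by
        ext y; simp only [mem_setOf_eq, mem_empty_iff_false, iff_false, not_lt]
        calc Real.exp (-‖x - y‖^2 / R) ≤ 1 := by
              apply Real.exp_le_one_iff.mpr
              exact div_nonpos_of_nonpos_of_nonneg (neg_nonpos.mpr (by positivity)) hR.le
          _ ≤ t := h1
      simp [hempty]
    · have ht0 : 0 < t := ht
      have hlogt : 0 ≤ Real.log t⁻¹ := by
        apply Real.log_nonneg; rw [le_inv_comm₀ one_pos ht0]; simpa using h1.le
      have hsub : {y | t < Real.exp (-‖x - y‖^2 / R)} ⊆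
          Metric.closedBall x (Real.sqrt (R * Real.log t⁻¹)) := by
        intro y hy
        simp only [mem_setOf_eq] at hy
        have hlt : Real.log t < -‖x - y‖^2 / R := by
          have := Real.log_lt_log ht0 hy; rwa [Real.log_exp] at this
        have hd2 : ‖x - y‖^2 ≤ R * Real.log t⁻¹ := by
          rw [Real.log_inv]
          have := (lt_div_iff₀ hR).mp hlt
          nlinarith
        have : ‖x - y‖ ≤ Real.sqrt (R * Real.log t⁻¹) := by
          have h := Real.sqrt_le_sqrt hd2
          rwa [Real.sqrt_sq (norm_nonneg _)] at h
        simpa [Metric.mem_closedBall, dist_eq_norm, norm_sub_rev y x] using this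
      rcases eq_or_lt_of_le hlogt with hlog0 | hlogpos
      · -- log t⁻¹ = 0, radius 0 : still fine if we use positivity of radius... handle:
        exfalso
        have : (1:ℝ) < t⁻¹ := (one_lt_inv₀ ht0).mpr h1
        have := Real.log_pos this
        rw [← hlog0] at this; exact lt_irrefl _ this
      · have hrpos : 0 < Real.sqrt (R * Real.log t⁻¹) := by
          apply Real.sqrt_pos.mpr; positivity
        calc σ {y | t < Real.exp (-‖x - y‖^2 / R)}
            ≤ σ (Metric.closedBall x (Real.sqrt (R * Real.log t⁻¹))) := measure_mono hsub
          _ ≤ ENNReal.ofReal (c * (Real.sqrt (R * Real.log t⁻¹)) ^ (n-1)) := hA _ _ hrpos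
          _ ≤ (Ioo (0:ℝ) 1).indicator
              (fun t => ENNReal.ofReal ((c * ((n:ℝ)-1) ^ p * R ^ p) * t ^ (-(1:ℝ)/2))) t := by
              rw [indicator_of_mem (by exact ⟨ht0, h1⟩ : t ∈ Ioo (0:ℝ) 1)]
              apply ENNReal.ofReal_le_ofReal
              have hsq : (Real.sqrt (R * Real.log t⁻¹)) ^ (n-1)
                  = (R * Real.log t⁻¹) ^ p := by
                rw [← Real.rpow_natCast (Real.sqrt _) (n-1),
                  Real.sqrt_eq_rpow, ← Real.rpow_mul (by positivity)]
                congr 1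
                rw [hp, Nat.cast_sub (by omega : 1 ≤ n)]
                push_cast; ring
              rw [hsq, Real.mul_rpow hR.le hlogpos.le]
              have hlogle : (Real.log t⁻¹) ^ p ≤ ((n:ℝ)-1) ^ p * t ^ (-(1:ℝ)/2) := by
                have hlb : Real.log t⁻¹ ≤ (t⁻¹) ^ (1/(2*p)) * (2*p) := by
                  have := Real.log_le_rpow_div (le_of_lt (by positivity : (0:ℝ) < t⁻¹))
                    (by positivity : 0 < 1/(2*p))
                  calc Real.log t⁻¹ ≤ (t⁻¹) ^ (1/(2*p)) / (1/(2*p)) := this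
                    _ = (t⁻¹) ^ (1/(2*p)) * (2*p) := by
                        field_simp
                have := Real.rpow_le_rpow hlogt hlb hppos.le
                calc (Real.log t⁻¹) ^ p ≤ ((t⁻¹) ^ (1/(2*p)) * (2*p)) ^ p := this
                  _ = ((n:ℝ)-1) ^ p * t ^ (-(1:ℝ)/2) := by
                      rw [Real.mul_rpow (by positivity) (by positivity),
                        ← Real.rpow_mul (by positivity),
                        show (1/(2*p)) * p = 1/2 by field_simp,
                        ← Real.rpow_neg_one t, ← Real.rpow_mul ht0.le]
                      rw [show (2:ℝ)*p = (n:ℝ)-1 by rw [hp]; ring]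
                      rw [show t ^ ((-1:ℝ) * (1/2)) = t ^ (-(1:ℝ)/2) by norm_num]
                      ring
              calc c * (R ^ p * Real.log t⁻¹ ^ p)
                  ≤ c * (R ^ p * (((n:ℝ)-1) ^ p * t ^ (-(1:ℝ)/2))) := by
                    apply mul_le_mul_of_nonneg_left _ hc.le
                    apply mul_le_mul_of_nonneg_left hlogle (by positivity)
                _ = (c * ((n:ℝ)-1) ^ p * R ^ p) * t ^ (-(1:ℝ)/2) := by ring
  calc ∫⁻ t in Ioi (0:ℝ), σ {y | t < Real.exp (-‖x - y‖^2 / R)}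
      ≤ ∫⁻ t in Ioi (0:ℝ), (Ioo (0:ℝ) 1).indicator
          (fun t => ENNReal.ofReal ((c * ((n:ℝ)-1) ^ p * R ^ p) * t ^ (-(1:ℝ)/2))) t := by
        apply setLIntegral_mono' measurableSet_Ioi key
    _ = ∫⁻ t in Ioo (0:ℝ) 1,
          ENNReal.ofReal ((c * ((n:ℝ)-1) ^ p * R ^ p) * t ^ (-(1:ℝ)/2)) := by
        rw [lintegral_indicator measurableSet_Ioo,
          Measure.restrict_restrict measurableSet_Ioo]
        congr 1
        rw [Set.inter_eq_left.mpr]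
        intro t ht; exact ht.1
    _ = ENNReal.ofReal (∫ t in Ioo (0:ℝ) 1, (c * ((n:ℝ)-1) ^ p * R ^ p) * t ^ (-(1:ℝ)/2)) := by
        rw [← ofReal_integral_eq_lintegral_ofReal]
        · apply Integrable.const_mul
          have : IntervalIntegrable (fun t : ℝ => t ^ (-(1:ℝ)/2)) volume 0 1 := by
            apply intervalIntegral.intervalIntegrable_rpow'
            norm_num
          have := (intervalIntegrable_iff_integrableOn_Ioo_of_le (by norm_num : (0:ℝ) ≤ 1)).mp this
          exact this
        · filter_upwards [ae_restrict_mem measurableSet_Ioo] with t ht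
          have : (0:ℝ) < t := ht.1
          positivity
    _ ≤ ENNReal.ofReal (An n * c * R ^ p) := by
        apply ENNReal.ofReal_le_ofReal
        rw [MeasureTheory.integral_const_mul]
        have hval : ∫ t in Ioo (0:ℝ) 1, t ^ (-(1:ℝ)/2) = 2 := by
          rw [← integral_Ioc_eq_integral_Ioo,
            ← intervalIntegral.integral_of_le (by norm_num : (0:ℝ) ≤ 1)]
          rw [integral_rpow (by norm_num)]
          norm_num
        rw [hval]
        have : 0 ≤ ((n:ℝ)-1) ^ p := by positivity
        unfold An
        calc c * ((n:ℝ)-1) ^ p * R ^ p * 2 = 2 * ((n:ℝ)-1) ^ p * c * R ^ p := by ring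
          _ ≤ 2 * ((n:ℝ)-1) ^ (((n:ℝ)-1)/2) * c * R ^ p := by rw [hp]

noncomputable def K1 (n : ℕ) : ℝ :=
  (4*Real.pi) ^ (-(n:ℝ)/2) * (4:ℝ) ^ (((n:ℝ)-1)/2) * An n

noncomputable def K2 (n : ℕ) : ℝ :=
  ((n:ℝ)/2 + 1) * (4*Real.pi) ^ (-(n:ℝ)/2) * (16:ℝ) ^ (((n:ℝ)-1)/2) * An n

lemma K1_pos {n : ℕ} (hn : 2 ≤ n) : 0 < K1 n := by
  have := An_pos hn; unfold K1
  have h1 : (0:ℝ) < (4*Real.pi) ^ (-(n:ℝ)/2) := by positivity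
  have h2 : (0:ℝ) < (4:ℝ) ^ (((n:ℝ)-1)/2) := by positivity
  positivity

lemma K2_pos {n : ℕ} (hn : 2 ≤ n) : 0 < K2 n := by
  have := An_pos hn; unfold K2
  have h1 : (0:ℝ) < (4*Real.pi) ^ (-(n:ℝ)/2) := by positivity
  have h2 : (0:ℝ) < (16:ℝ) ^ (((n:ℝ)-1)/2) := by positivity
  positivity

lemma Sn_diff_le {n : ℕ} {a b : ℝ} (hb : 0 < b) (hba : b ≤ a)
    (z : EuclideanSpace ℝ (Fin n)) :
    |Sn n a z - Sn n b z| ≤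
      (a - b) * (((n:ℝ)/2 + 1) * (4*Real.pi)^(-(n:ℝ)/2) * b ^ (-(n:ℝ)/2 - 1)
        * Real.exp (-‖z‖^2 / (8*a))) := by
  have ha : 0 < a := lt_of_lt_of_le hb hba
  set r : ℝ := ‖z‖^2 with hr
  have hr0 : 0 ≤ r := by positivity
  set C : ℝ := ((n:ℝ)/2 + 1) * (4*Real.pi)^(-(n:ℝ)/2) * b ^ (-(n:ℝ)/2 - 1)
      * Real.exp (-r / (8*a)) with hC
  have key : ∀ s ∈ Icc b a, ‖heatK' n r s‖ ≤ C := by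
    intro s hs
    have hs0 : 0 < s := lt_of_lt_of_le hb hs.1
    calc ‖heatK' n r s‖ = |heatK' n r s| := rfl
      _ ≤ ((n:ℝ)/2 + 1) * (4*Real.pi)^(-(n:ℝ)/2) * s ^ (-(n:ℝ)/2 - 1)
            * Real.exp (-r/(8*s)) := heatK'_bound hs0 hr0
      _ ≤ C := by
          rw [hC]
          apply mul_le_mul
          · apply mul_le_mul_of_nonneg_left _ (by positivity)
            exact Real.rpow_le_rpow_of_nonpos hb hs.1 (by
              have : (0:ℝ) ≤ (n:ℝ) := Nat.cast_nonneg n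
              linarith)
          · apply Real.exp_le_exp.mpr
            rw [neg_div, neg_div, neg_le_neg_iff]
            exact div_le_div_of_nonneg_left hr0 (by positivity) (by
              have := hs.2; linarith)
          · positivity
          · positivity
  have hmvt := Convex.norm_image_sub_le_of_norm_hasDerivWithin_le
    (f := heatK n r) (f' := heatK' n r) (s := Icc b a) (C := C)
    (fun s hs => (heatK_hasDerivAt (lt_of_lt_of_le hb hs.1)).hasDerivWithinAt)
    key (convex_Icc b a) (left_mem_Icc.mpr hba) (right_mem_Icc.mpr hba)
  rw [Sn_eq ha z, Sn_eq hb z, ← hr]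
  calc |heatK n r a - heatK n r b| ≤ C * ‖a - b‖ := hmvt
    _ = (a - b) * C := by
        rw [Real.norm_eq_abs, abs_of_nonneg (by linarith)]; ring

lemma measurable_Sn (n : ℕ) :
    Measurable fun p : ℝ × EuclideanSpace ℝ (Fin n) => Sn n p.1 p.2 := by
  unfold Sn
  apply Measurable.ite
  · exact measurableSet_lt measurable_const measurable_fst
  · fun_prop
  · exact measurable_const

section Inner

variable {n : ℕ} {c : ℝ} {σ : Measure (EuclideanSpace ℝ (Fin n))}
  {M : ℝ} {g : EuclideanSpace ℝ (Fin n) → ℝ} {x : EuclideanSpace ℝ (Fin n)}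

lemma Sn_le_pref {s : ℝ} (hs : 0 < s) (z : EuclideanSpace ℝ (Fin n)) :
    Sn n s z ≤ (4*Real.pi*s) ^ (-(n:ℝ)/2) := by
  rw [Sn, if_pos hs]
  have h1 : Real.exp (-‖z‖^2 / (4*s)) ≤ 1 := by
    apply Real.exp_le_one_iff.mpr
    exact div_nonpos_of_nonpos_of_nonneg (neg_nonpos.mpr (by positivity)) (by positivity)
  calc (4*Real.pi*s) ^ (-(n:ℝ)/2) * Real.exp (-‖z‖^2 / (4*s))
      ≤ (4*Real.pi*s) ^ (-(n:ℝ)/2) * 1 := by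
        apply mul_le_mul_of_nonneg_left h1 (by positivity)
    _ = (4*Real.pi*s) ^ (-(n:ℝ)/2) := mul_one _

lemma inner_integrable [IsFiniteMeasure σ] (hgm : Measurable g)
    (hM : 0 ≤ M) (hg : ∀ y, |g y| ≤ M) {s : ℝ} (hs : 0 < s) :
    Integrable (fun y => Sn n s (x - y) * g y) σ := by
  apply (integrable_const ((4*Real.pi*s) ^ (-(n:ℝ)/2) * M)).mono'
  · apply Measurable.aestronglyMeasurable
    apply Measurable.mul _ hgm
    exact (measurable_Sn n).comp (measurable_const.prodMk (measurable_const.sub measurable_id))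
  · filter_upwards [] with y
    rw [norm_mul, Real.norm_eq_abs, Real.norm_eq_abs,
      abs_of_nonneg (Sn_nonneg n s _)]
    apply mul_le_mul (Sn_le_pref hs _) (hg y) (abs_nonneg _) (by positivity)

lemma inner_abs_le (hn : 2 ≤ n) (hc : 0 < c)
    (hA : ∀ (x : EuclideanSpace ℝ (Fin n)) (r : ℝ), 0 < r →
        σ (Metric.closedBall x r) ≤ ENNReal.ofReal (c * r ^ (n - 1)))
    (hM : 0 ≤ M) (hg : ∀ y, |g y| ≤ M) {s : ℝ} (hs : 0 < s) :
    |∫ y, Sn n s (x - y) * g y ∂σ| ≤ K1 n * c * M * s ^ (-(1:ℝ)/2) := by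
  have hK1 := K1_pos hn
  have hval : 0 ≤ K1 n * c * M * s ^ (-(1:ℝ)/2) := by positivity
  have hpt : ∀ y, ENNReal.ofReal ‖Sn n s (x - y) * g y‖ ≤
      ENNReal.ofReal ((4*Real.pi*s) ^ (-(n:ℝ)/2) * M) *
        ENNReal.ofReal (Real.exp (-‖x - y‖^2 / (4*s))) := by
    intro y
    rw [← ENNReal.ofReal_mul (by positivity)]
    apply ENNReal.ofReal_le_ofReal
    rw [norm_mul, Real.norm_eq_abs, Real.norm_eq_abs, abs_of_nonneg (Sn_nonneg n s _),
      Sn_eq hs, heatK]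
    calc (4*Real.pi*s) ^ (-(n:ℝ)/2) * Real.exp (-‖x-y‖^2 / (4*s)) * |g y|
        ≤ (4*Real.pi*s) ^ (-(n:ℝ)/2) * Real.exp (-‖x-y‖^2 / (4*s)) * M := by
          apply mul_le_mul_of_nonneg_left (hg y) (by positivity)
      _ = (4*Real.pi*s) ^ (-(n:ℝ)/2) * M * Real.exp (-‖x-y‖^2 / (4*s)) := by ring
  have hlin : (∫⁻ y, ENNReal.ofReal ‖Sn n s (x - y) * g y‖ ∂σ) ≤
      ENNReal.ofReal (K1 n * c * M * s ^ (-(1:ℝ)/2)) := by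
    calc (∫⁻ y, ENNReal.ofReal ‖Sn n s (x - y) * g y‖ ∂σ)
        ≤ ∫⁻ y, ENNReal.ofReal ((4*Real.pi*s) ^ (-(n:ℝ)/2) * M) *
            ENNReal.ofReal (Real.exp (-‖x - y‖^2 / (4*s))) ∂σ := lintegral_mono hpt
      _ = ENNReal.ofReal ((4*Real.pi*s) ^ (-(n:ℝ)/2) * M) *
            ∫⁻ y, ENNReal.ofReal (Real.exp (-‖x - y‖^2 / (4*s))) ∂σ :=
          lintegral_const_mul' _ _ ENNReal.ofReal_ne_top
      _ ≤ ENNReal.ofReal ((4*Real.pi*s) ^ (-(n:ℝ)/2) * M) *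
            ENNReal.ofReal (An n * c * (4*s) ^ (((n:ℝ)-1)/2)) := by
          apply mul_le_mul_right (exp_lintegral_bound hn hc σ hA x (by positivity))
      _ = ENNReal.ofReal ((4*Real.pi*s) ^ (-(n:ℝ)/2) * M *
            (An n * c * (4*s) ^ (((n:ℝ)-1)/2))) := by
          rw [← ENNReal.ofReal_mul (by positivity)]
      _ = ENNReal.ofReal (K1 n * c * M * s ^ (-(1:ℝ)/2)) := by
          congr 1
          rw [K1, Real.mul_rpow (by positivity) hs.le,
            Real.mul_rpow (by norm_num) hs.le]
          rw [show (4*Real.pi)^(-(n:ℝ)/2) * s^(-(n:ℝ)/2) * M *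
              (An n * c * ((4:ℝ)^(((n:ℝ)-1)/2) * s^(((n:ℝ)-1)/2)))
              = (4*Real.pi)^(-(n:ℝ)/2) * (4:ℝ)^(((n:ℝ)-1)/2) * An n * c * M *
                (s^(-(n:ℝ)/2) * s^(((n:ℝ)-1)/2)) from by ring,
            ← Real.rpow_add hs]
          rw [show -(n:ℝ)/2 + ((n:ℝ)-1)/2 = -(1:ℝ)/2 by ring]
  calc |∫ y, Sn n s (x - y) * g y ∂σ| = ‖∫ y, Sn n s (x - y) * g y ∂σ‖ := rfl
    _ ≤ (∫⁻ y, ENNReal.ofReal ‖Sn n s (x - y) * g y‖ ∂σ).toReal :=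
        norm_integral_le_lintegral_norm _
    _ ≤ K1 n * c * M * s ^ (-(1:ℝ)/2) := ENNReal.toReal_le_of_le_ofReal hval hlin

lemma inner_diff_le [IsFiniteMeasure σ] (hn : 2 ≤ n) (hc : 0 < c)
    (hA : ∀ (x : EuclideanSpace ℝ (Fin n)) (r : ℝ), 0 < r →
        σ (Metric.closedBall x r) ≤ ENNReal.ofReal (c * r ^ (n - 1)))
    (hgm : Measurable g) (hM : 0 ≤ M) (hg : ∀ y, |g y| ≤ M)
    {a b : ℝ} (hb : 0 < b) (hba : b ≤ a) (h2b : a ≤ 2*b) :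
    |∫ y, Sn n a (x - y) * g y ∂σ - ∫ y, Sn n b (x - y) * g y ∂σ| ≤
      K2 n * c * M * ((a - b) * b ^ (-(3:ℝ)/2)) := by
  have ha : 0 < a := lt_of_lt_of_le hb hba
  have hK2 := K2_pos hn
  have hab : 0 ≤ a - b := by linarith
  set D : ℝ := (a-b) * (((n:ℝ)/2+1) * (4*Real.pi)^(-(n:ℝ)/2) * b^(-(n:ℝ)/2-1)) * M with hD
  have hD0 : 0 ≤ D := by
    rw [hD]
    have h1 : (0:ℝ) < (4*Real.pi)^(-(n:ℝ)/2) := by positivity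
    have h2 : (0:ℝ) < b^(-(n:ℝ)/2-1) := Real.rpow_pos_of_pos hb _
    positivity
  rw [← MeasureTheory.integral_sub (inner_integrable hgm hM hg ha)
      (inner_integrable hgm hM hg hb)]
  have hpt : ∀ y, ENNReal.ofReal ‖Sn n a (x - y) * g y - Sn n b (x - y) * g y‖ ≤
      ENNReal.ofReal D * ENNReal.ofReal (Real.exp (-‖x - y‖^2 / (8*a))) := by
    intro y
    rw [← ENNReal.ofReal_mul hD0]
    apply ENNReal.ofReal_le_ofReal
    rw [show Sn n a (x - y) * g y - Sn n b (x - y) * g y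
        = (Sn n a (x - y) - Sn n b (x - y)) * g y from by ring,
      norm_mul, Real.norm_eq_abs, Real.norm_eq_abs]
    calc |Sn n a (x - y) - Sn n b (x - y)| * |g y|
        ≤ ((a - b) * (((n:ℝ)/2 + 1) * (4*Real.pi)^(-(n:ℝ)/2) * b ^ (-(n:ℝ)/2 - 1)
            * Real.exp (-‖x-y‖^2 / (8*a)))) * M := by
          apply mul_le_mul (Sn_diff_le hb hba _) (hg y) (abs_nonneg _)
          have h2 : (0:ℝ) < b^(-(n:ℝ)/2-1) := Real.rpow_pos_of_pos hb _
          positivity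
      _ = D * Real.exp (-‖x-y‖^2 / (8*a)) := by rw [hD]; ring
  have hfin : D * (An n * c * (8*a) ^ (((n:ℝ)-1)/2)) ≤
      K2 n * c * M * ((a - b) * b ^ (-(3:ℝ)/2)) := by
    have h8a : (8*a) ^ (((n:ℝ)-1)/2) ≤ (16:ℝ)^(((n:ℝ)-1)/2) * b ^ (((n:ℝ)-1)/2) := by
      rw [← Real.mul_rpow (by norm_num) hb.le]
      apply Real.rpow_le_rpow (by positivity) (by linarith)
      have h2 : (2:ℝ) ≤ (n:ℝ) := by exact_mod_cast hn
      linarith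
    have hAn := An_pos hn
    calc D * (An n * c * (8*a) ^ (((n:ℝ)-1)/2))
        ≤ D * (An n * c * ((16:ℝ)^(((n:ℝ)-1)/2) * b ^ (((n:ℝ)-1)/2))) := by
          apply mul_le_mul_of_nonneg_left _ hD0
          apply mul_le_mul_of_nonneg_left h8a (by positivity)
      _ = K2 n * c * M * ((a - b) * (b^(-(n:ℝ)/2-1) * b ^ (((n:ℝ)-1)/2))) := by
          rw [hD, K2]; ring
      _ = K2 n * c * M * ((a - b) * b ^ (-(3:ℝ)/2)) := by
          rw [← Real.rpow_add hb, show -(n:ℝ)/2-1 + ((n:ℝ)-1)/2 = -(3:ℝ)/2 by ring]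
  have hval : 0 ≤ K2 n * c * M * ((a - b) * b ^ (-(3:ℝ)/2)) := by
    have h2 : (0:ℝ) < b^(-(3:ℝ)/2) := Real.rpow_pos_of_pos hb _
    positivity
  calc |∫ y, (Sn n a (x - y) * g y - Sn n b (x - y) * g y) ∂σ|
      = ‖∫ y, (Sn n a (x - y) * g y - Sn n b (x - y) * g y) ∂σ‖ := rfl
    _ ≤ (∫⁻ y, ENNReal.ofReal ‖Sn n a (x - y) * g y - Sn n b (x - y) * g y‖ ∂σ).toReal :=
        norm_integral_le_lintegral_norm _
    _ ≤ K2 n * c * M * ((a - b) * b ^ (-(3:ℝ)/2)) := by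
        apply ENNReal.toReal_le_of_le_ofReal hval
        calc (∫⁻ y, ENNReal.ofReal ‖Sn n a (x - y) * g y - Sn n b (x - y) * g y‖ ∂σ)
            ≤ ∫⁻ y, ENNReal.ofReal D *
                ENNReal.ofReal (Real.exp (-‖x - y‖^2 / (8*a))) ∂σ := lintegral_mono hpt
          _ = ENNReal.ofReal D * ∫⁻ y, ENNReal.ofReal (Real.exp (-‖x - y‖^2 / (8*a))) ∂σ :=
              lintegral_const_mul' _ _ ENNReal.ofReal_ne_top
          _ ≤ ENNReal.ofReal D * ENNReal.ofReal (An n * c * (8*a) ^ (((n:ℝ)-1)/2)) :=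
              mul_le_mul_right (exp_lintegral_bound hn hc σ hA x (by positivity)) _
          _ = ENNReal.ofReal (D * (An n * c * (8*a) ^ (((n:ℝ)-1)/2))) := by
              rw [← ENNReal.ofReal_mul hD0]
          _ ≤ ENNReal.ofReal (K2 n * c * M * ((a - b) * b ^ (-(3:ℝ)/2))) :=
              ENNReal.ofReal_le_ofReal hfin

end Inner

lemma rpow_comp_integrableOn (t u w r : ℝ) (hr : -1 < r) :
    IntegrableOn (fun τ => (t - τ) ^ r) (Ioc u w) volume := by
  rcases le_or_gt u w with huw | huw
  · have h1 : IntervalIntegrable (fun s : ℝ => s ^ r) volume (t - u) (t - w) :=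
      intervalIntegral.intervalIntegrable_rpow' hr
    have h2 := h1.comp_sub_left t
    simp only [sub_sub_cancel] at h2
    exact (intervalIntegrable_iff_integrableOn_Ioc_of_le huw).mp h2
  · rw [Set.Ioc_eq_empty (by exact not_lt.mpr huw.le)]
    exact integrableOn_empty

lemma integral_Ioc_comp_sub (t u w r : ℝ) (huw : u ≤ w) :
    ∫ τ in Ioc u w, (t - τ) ^ r = ∫ s in (t - w)..(t - u), s ^ r := by
  rw [← intervalIntegral.integral_of_le huw]
  exact intervalIntegral.integral_comp_sub_left (fun s => s ^ r) t

lemma key_est {n : ℕ} (hn : 2 ≤ n) {c : ℝ} (hc : 0 < c)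
    (σ : Measure (EuclideanSpace ℝ (Fin n))) [IsFiniteMeasure σ]
    (hA : ∀ (x : EuclideanSpace ℝ (Fin n)) (r : ℝ), 0 < r →
        σ (Metric.closedBall x r) ≤ ENNReal.ofReal (c * r ^ (n - 1)))
    (μ : ℝ → EuclideanSpace ℝ (Fin n) → ℝ) (hμ : Measurable (Function.uncurry μ))
    (M : ℝ) (hμM : ∀ t x, |μ t x| ≤ M)
    {t₁ t₂ : ℝ} (h0 : 0 ≤ t₂) (h21 : t₂ ≤ t₁) (x : EuclideanSpace ℝ (Fin n)) :
    |singleLayer n σ μ t₁ x - singleLayer n σ μ t₂ x| ≤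
      (6 * K1 n + 2 * K2 n) * c * M * (t₁ - t₂) ^ ((1:ℝ)/2) := by
  have hM : 0 ≤ M := le_trans (abs_nonneg _) (hμM 0 0)
  have hK1 := K1_pos hn
  have hK2 := K2_pos hn
  set δ : ℝ := t₁ - t₂ with hδ
  have hδ0 : 0 ≤ δ := by rw [hδ]; linarith
  rcases eq_or_lt_of_le hδ0 with hδeq | hδpos
  · have ht : t₁ = t₂ := by rw [hδ] at hδeq; linarith
    rw [ht, sub_self, abs_zero]
    have h' : (0:ℝ) ≤ δ ^ ((1:ℝ)/2) := Real.rpow_nonneg hδ0 _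
    positivity
  -- abbreviations
  set G : ℝ → ℝ → ℝ := fun t τ => ∫ y, Sn n (t - τ) (x - y) * μ τ y ∂σ with hG
  have hGsm : ∀ t : ℝ, StronglyMeasurable (G t) := by
    intro t
    apply MeasureTheory.StronglyMeasurable.integral_prod_right
      (f := fun τ y => Sn n (t - τ) (x - y) * μ τ y)
    apply Measurable.stronglyMeasurable
    exact ((measurable_Sn n).comp ((measurable_const.sub measurable_fst).prodMk
      (measurable_const.sub measurable_snd))).mul hμ
  have hGb : ∀ t τ : ℝ, τ ≤ t → |G t τ| ≤ K1 n * c * M * (t - τ) ^ (-(1:ℝ)/2) := by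
    intro t τ hτ
    rcases eq_or_lt_of_le hτ with heq | hlt
    · have hz : ∀ y, Sn n (t - τ) (x - y) * μ τ y = 0 := by
        intro y; rw [← heq, sub_self]
        simp [Sn]
      have : G t τ = 0 := by
        rw [hG]; simp only []
        rw [show (fun y => Sn n (t - τ) (x - y) * μ τ y) = fun _ => (0:ℝ) from funext hz]
        simp
      rw [this, abs_zero, ← heq, sub_self, Real.zero_rpow (by norm_num)]
      simp
    · exact inner_abs_le hn hc hA hM (fun y => hμM τ y) (by linarith)
  have hGint : ∀ t u w : ℝ, u ≤ w → w ≤ t → IntegrableOn (G t) (Ioc u w) volume := by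
    intro t u w huw hwt
    apply Integrable.mono'
      ((rpow_comp_integrableOn t u w (-(1:ℝ)/2) (by norm_num)).const_mul (K1 n * c * M))
      ((hGsm t).aestronglyMeasurable)
    filter_upwards [ae_restrict_mem measurableSet_Ioc] with τ hτ
    rw [Real.norm_eq_abs]
    exact hGb t τ (le_trans hτ.2 hwt)
  -- split the integral
  have hsplit : singleLayer n σ μ t₁ x =
      (∫ τ in Ioc 0 t₂, G t₁ τ) + ∫ τ in Ioc t₂ t₁, G t₁ τ := by
    rw [show singleLayer n σ μ t₁ x = ∫ τ in Ioc 0 t₁, G t₁ τ from rfl]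
    rw [← MeasureTheory.setIntegral_union (Set.Ioc_disjoint_Ioc_of_le le_rfl) measurableSet_Ioc
      (hGint t₁ 0 t₂ h0 (by linarith)) (hGint t₁ t₂ t₁ h21 le_rfl)]
    rw [Set.Ioc_union_Ioc_eq_Ioc h0 h21]
  have h2 : singleLayer n σ μ t₂ x = ∫ τ in Ioc 0 t₂, G t₂ τ := rfl
  have hdiff : singleLayer n σ μ t₁ x - singleLayer n σ μ t₂ x =
      (∫ τ in Ioc 0 t₂, (G t₁ τ - G t₂ τ)) + ∫ τ in Ioc t₂ t₁, G t₁ τ := by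
    rw [hsplit, h2, MeasureTheory.integral_sub (hGint t₁ 0 t₂ h0 (by linarith))
      (hGint t₂ 0 t₂ h0 le_rfl)]
    ring
  -- ae nonequality
  have hne : ∀ (w : ℝ) (s : Set ℝ), ∀ᵐ τ ∂(volume.restrict s), τ ≠ w := by
    intro w s
    apply ae_restrict_of_ae
    refine ae_iff.mpr ?_
    have : {τ : ℝ | ¬ τ ≠ w} = {w} := by ext τ; simp
    rw [this]
    exact Real.volume_singleton
  -- Term I
  have hcomp1 : ∫ τ in Ioc t₂ t₁, (t₁ - τ) ^ (-(1:ℝ)/2) = 2 * δ ^ ((1:ℝ)/2) := by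
    rw [integral_Ioc_comp_sub _ _ _ _ h21, sub_self,
      integral_rpow (Or.inl (by norm_num)), Real.zero_rpow (by norm_num)]
    rw [show -(1:ℝ)/2 + 1 = 1/2 by norm_num]
    rw [← hδ]
    ring
  have hTermI : |∫ τ in Ioc t₂ t₁, G t₁ τ| ≤ 2 * K1 n * c * M * δ ^ ((1:ℝ)/2) := by
    calc |∫ τ in Ioc t₂ t₁, G t₁ τ|
        ≤ ∫ τ in Ioc t₂ t₁, K1 n * c * M * (t₁ - τ) ^ (-(1:ℝ)/2) := by
          rw [← Real.norm_eq_abs]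
          apply MeasureTheory.norm_integral_le_of_norm_le
            ((rpow_comp_integrableOn t₁ t₂ t₁ (-(1:ℝ)/2) (by norm_num)).const_mul (K1 n * c * M))
          filter_upwards [ae_restrict_mem measurableSet_Ioc] with τ hτ
          rw [Real.norm_eq_abs]
          exact hGb t₁ τ hτ.2
      _ = K1 n * c * M * ∫ τ in Ioc t₂ t₁, (t₁ - τ) ^ (-(1:ℝ)/2) :=
          MeasureTheory.integral_const_mul _ _
      _ = 2 * K1 n * c * M * δ ^ ((1:ℝ)/2) := by rw [hcomp1]; ring
  -- near piece
  have hIIa : ∀ u : ℝ, u ≤ t₂ → t₂ - u ≤ δ →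
      |∫ τ in Ioc u t₂, (G t₁ τ - G t₂ τ)| ≤ 4 * K1 n * c * M * δ ^ ((1:ℝ)/2) := by
    intro u hu hud
    have hcomp2 : ∫ τ in Ioc u t₂, (t₂ - τ) ^ (-(1:ℝ)/2) = 2 * (t₂ - u) ^ ((1:ℝ)/2) := by
      rw [integral_Ioc_comp_sub _ _ _ _ hu, sub_self,
        integral_rpow (Or.inl (by norm_num)), Real.zero_rpow (by norm_num)]
      rw [show -(1:ℝ)/2 + 1 = 1/2 by norm_num]
      ring
    calc |∫ τ in Ioc u t₂, (G t₁ τ - G t₂ τ)|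
        ≤ ∫ τ in Ioc u t₂, 2 * K1 n * c * M * (t₂ - τ) ^ (-(1:ℝ)/2) := by
          rw [← Real.norm_eq_abs]
          apply MeasureTheory.norm_integral_le_of_norm_le
            ((rpow_comp_integrableOn t₂ u t₂ (-(1:ℝ)/2) (by norm_num)).const_mul
              (2 * K1 n * c * M))
          filter_upwards [ae_restrict_mem measurableSet_Ioc, hne t₂ _] with τ hτ hτne
          have hτ2 : τ < t₂ := lt_of_le_of_ne hτ.2 hτne
          have hb : (0:ℝ) < t₂ - τ := by linarith
          rw [Real.norm_eq_abs]
          have h1 : |G t₁ τ| ≤ K1 n * c * M * (t₁ - τ) ^ (-(1:ℝ)/2) := hGb t₁ τ (by linarith)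
          have h2 : |G t₂ τ| ≤ K1 n * c * M * (t₂ - τ) ^ (-(1:ℝ)/2) := hGb t₂ τ (by linarith)
          have h3 : (t₁ - τ) ^ (-(1:ℝ)/2) ≤ (t₂ - τ) ^ (-(1:ℝ)/2) :=
            Real.rpow_le_rpow_of_nonpos hb (by linarith) (by norm_num)
          calc |G t₁ τ - G t₂ τ| ≤ |G t₁ τ| + |G t₂ τ| := abs_sub _ _
            _ ≤ K1 n * c * M * (t₁ - τ) ^ (-(1:ℝ)/2)
                + K1 n * c * M * (t₂ - τ) ^ (-(1:ℝ)/2) := add_le_add h1 h2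
            _ ≤ K1 n * c * M * (t₂ - τ) ^ (-(1:ℝ)/2)
                + K1 n * c * M * (t₂ - τ) ^ (-(1:ℝ)/2) := by
                apply add_le_add_left
                apply mul_le_mul_of_nonneg_left h3 (by positivity)
            _ = 2 * K1 n * c * M * (t₂ - τ) ^ (-(1:ℝ)/2) := by ring
      _ = 2 * K1 n * c * M * ∫ τ in Ioc u t₂, (t₂ - τ) ^ (-(1:ℝ)/2) :=
          MeasureTheory.integral_const_mul _ _
      _ = 2 * K1 n * c * M * (2 * (t₂ - u) ^ ((1:ℝ)/2)) := by rw [hcomp2]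
      _ ≤ 2 * K1 n * c * M * (2 * δ ^ ((1:ℝ)/2)) := by
          apply mul_le_mul_of_nonneg_left _ (by positivity)
          apply mul_le_mul_of_nonneg_left _ (by norm_num)
          exact Real.rpow_le_rpow (by linarith) hud (by norm_num)
      _ = 4 * K1 n * c * M * δ ^ ((1:ℝ)/2) := by ring
  -- Term II
  have hTermII : |∫ τ in Ioc 0 t₂, (G t₁ τ - G t₂ τ)| ≤
      (4 * K1 n + 2 * K2 n) * c * M * δ ^ ((1:ℝ)/2) := by
    have hδh : (0:ℝ) ≤ δ ^ ((1:ℝ)/2) := Real.rpow_nonneg hδ0 _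
    rcases le_or_gt t₂ δ with hcase | hcase
    · calc |∫ τ in Ioc 0 t₂, (G t₁ τ - G t₂ τ)| ≤ 4 * K1 n * c * M * δ ^ ((1:ℝ)/2) :=
            hIIa 0 h0 (by linarith)
        _ ≤ (4 * K1 n + 2 * K2 n) * c * M * δ ^ ((1:ℝ)/2) := by
            nlinarith [mul_nonneg (mul_nonneg (mul_nonneg hK2.le hc.le) hM) hδh]
    · -- far + near split at m = t₂ - δ
      set m : ℝ := t₂ - δ with hm
      have hm0 : 0 < m := by rw [hm]; linarith
      have hmt : m ≤ t₂ := by rw [hm]; linarith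
      have hintd : ∀ u w : ℝ, u ≤ w → w ≤ t₂ →
          IntegrableOn (fun τ => G t₁ τ - G t₂ τ) (Ioc u w) volume :=
        fun u w huw hw => (hGint t₁ u w huw (by linarith)).sub (hGint t₂ u w huw hw)
      have hsplit2 : ∫ τ in Ioc 0 t₂, (G t₁ τ - G t₂ τ) =
          (∫ τ in Ioc 0 m, (G t₁ τ - G t₂ τ)) + ∫ τ in Ioc m t₂, (G t₁ τ - G t₂ τ) := by
        rw [← MeasureTheory.setIntegral_union (Set.Ioc_disjoint_Ioc_of_le le_rfl) measurableSet_Ioc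
          (hintd 0 m hm0.le hmt) (hintd m t₂ hmt le_rfl),
          Set.Ioc_union_Ioc_eq_Ioc hm0.le hmt]
      have hIIb : |∫ τ in Ioc 0 m, (G t₁ τ - G t₂ τ)| ≤ 2 * K2 n * c * M * δ ^ ((1:ℝ)/2) := by
        have hcomp3 : ∫ τ in Ioc 0 m, (t₂ - τ) ^ (-(3:ℝ)/2)
            = 2 * (δ ^ (-(1:ℝ)/2) - t₂ ^ (-(1:ℝ)/2)) := by
          rw [integral_Ioc_comp_sub _ _ _ _ hm0.le, sub_zero,
            show t₂ - m = δ from by rw [hm]; ring,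
            integral_rpow (Or.inr ⟨by norm_num, Set.notMem_uIcc_of_lt hδpos (by linarith)⟩)]
          rw [show -(3:ℝ)/2 + 1 = -(1:ℝ)/2 by norm_num]
          ring
        calc |∫ τ in Ioc 0 m, (G t₁ τ - G t₂ τ)|
            ≤ ∫ τ in Ioc 0 m, (K2 n * c * M * δ) * (t₂ - τ) ^ (-(3:ℝ)/2) := by
              rw [← Real.norm_eq_abs]
              have hint3 : IntegrableOn (fun τ => (t₂ - τ) ^ (-(3:ℝ)/2)) (Ioc 0 m) volume := by
                apply IntegrableOn.mono_set _ Set.Ioc_subset_Icc_self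
                apply ContinuousOn.integrableOn_Icc
                apply ContinuousOn.rpow_const
                · exact (continuous_const.sub continuous_id).continuousOn
                · intro τ hτ
                  left
                  have : τ ≤ m := hτ.2
                  have : δ ≤ t₂ - τ := by rw [hm] at this; linarith
                  exact ne_of_gt (by linarith)
              apply MeasureTheory.norm_integral_le_of_norm_le
                (hint3.const_mul (K2 n * c * M * δ))
              filter_upwards [ae_restrict_mem measurableSet_Ioc] with τ hτ
              have hb : (0:ℝ) < t₂ - τ := by
                have := hτ.2; rw [hm] at this; linarith
              have hbδ : δ ≤ t₂ - τ := by
                have := hτ.2; rw [hm] at this; linarith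
              rw [Real.norm_eq_abs]
              have hd := inner_diff_le (σ := σ) (g := μ τ) (x := x) hn hc hA
                (hμ.of_uncurry_left) hM (fun y => hμM τ y)
                hb (by linarith : t₂ - τ ≤ t₁ - τ) (by linarith : t₁ - τ ≤ 2*(t₂ - τ))
              calc |G t₁ τ - G t₂ τ|
                  ≤ K2 n * c * M * ((t₁ - τ - (t₂ - τ)) * (t₂ - τ) ^ (-(3:ℝ)/2)) := hd
                _ = (K2 n * c * M * δ) * (t₂ - τ) ^ (-(3:ℝ)/2) := by
                    rw [show t₁ - τ - (t₂ - τ) = δ from by rw [hδ]; ring]; ring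
          _ = K2 n * c * M * δ * ∫ τ in Ioc 0 m, (t₂ - τ) ^ (-(3:ℝ)/2) :=
              MeasureTheory.integral_const_mul _ _
          _ = K2 n * c * M * δ * (2 * (δ ^ (-(1:ℝ)/2) - t₂ ^ (-(1:ℝ)/2))) := by rw [hcomp3]
          _ ≤ K2 n * c * M * δ * (2 * δ ^ (-(1:ℝ)/2)) := by
              apply mul_le_mul_of_nonneg_left _ (by positivity)
              have ht2p : (0:ℝ) ≤ t₂ ^ (-(1:ℝ)/2) := Real.rpow_nonneg (by linarith) _
              nlinarith
          _ = 2 * K2 n * c * M * (δ ^ (1:ℝ) * δ ^ (-(1:ℝ)/2)) := by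
              rw [Real.rpow_one]; ring
          _ = 2 * K2 n * c * M * δ ^ ((1:ℝ)/2) := by
              rw [← Real.rpow_add hδpos]; norm_num
      calc |∫ τ in Ioc 0 t₂, (G t₁ τ - G t₂ τ)|
          ≤ |∫ τ in Ioc 0 m, (G t₁ τ - G t₂ τ)| + |∫ τ in Ioc m t₂, (G t₁ τ - G t₂ τ)| := by
            rw [hsplit2]; exact abs_add_le _ _
        _ ≤ 2 * K2 n * c * M * δ ^ ((1:ℝ)/2) + 4 * K1 n * c * M * δ ^ ((1:ℝ)/2) :=
            add_le_add hIIb (hIIa m hmt (by rw [hm]; linarith))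
        _ = (4 * K1 n + 2 * K2 n) * c * M * δ ^ ((1:ℝ)/2) := by ring
  calc |singleLayer n σ μ t₁ x - singleLayer n σ μ t₂ x|
      ≤ |∫ τ in Ioc 0 t₂, (G t₁ τ - G t₂ τ)| + |∫ τ in Ioc t₂ t₁, G t₁ τ| := by
        rw [hdiff]; exact abs_add_le _ _
    _ ≤ (4 * K1 n + 2 * K2 n) * c * M * δ ^ ((1:ℝ)/2) + 2 * K1 n * c * M * δ ^ ((1:ℝ)/2) :=
        add_le_add hTermII hTermI
    _ = (6 * K1 n + 2 * K2 n) * c * M * δ ^ ((1:ℝ)/2) := by ring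

/-- If `σ` is upper `(n−1)`-Ahlfors regular with constant `c`, then there is a constant `C > 0`,
depending only on `n` and `c`, such that the single layer heat potential is `1/2`-Hölder
continuous in time, with constant `C · sup|μ|`. -/
theorem singleLayer_holder_time (n : ℕ) (hn : 2 ≤ n) (c : ℝ) (hc : 0 < c) :
    ∃ C : ℝ, 0 < C ∧
      ∀ T : ℝ, 0 < T →
      ∀ σ : Measure (EuclideanSpace ℝ (Fin n)), IsFiniteMeasure σ →
      ∀ K : Set (EuclideanSpace ℝ (Fin n)), IsCompact K →
        K = {x | ∀ U : Set (EuclideanSpace ℝ (Fin n)), IsOpen U → x ∈ U → σ U ≠ 0} →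
      (∀ (x : EuclideanSpace ℝ (Fin n)) (r : ℝ), 0 < r →
        σ (Metric.closedBall x r) ≤ ENNReal.ofReal (c * r ^ (n - 1))) →
      ∀ μ : ℝ → EuclideanSpace ℝ (Fin n) → ℝ, Measurable (Function.uncurry μ) →
      ∀ M : ℝ, (∀ t x, |μ t x| ≤ M) →
      ∀ t₁ ∈ Set.Icc (0 : ℝ) T, ∀ t₂ ∈ Set.Icc (0 : ℝ) T,
      ∀ x : EuclideanSpace ℝ (Fin n),
        |singleLayer n σ μ t₁ x - singleLayer n σ μ t₂ x| ≤
          C * M * |t₁ - t₂| ^ ((1 : ℝ) / 2) := by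
  have hK1 := K1_pos hn
  have hK2 := K2_pos hn
  refine ⟨(6 * K1 n + 2 * K2 n) * c + 1, by positivity, ?_⟩
  intro T hT σ hσfin K hK hKsupp hA μ hμ M hμM t₁ ht₁ t₂ ht₂ x
  haveI := hσfin
  have hM : 0 ≤ M := le_trans (abs_nonneg _) (hμM 0 0)
  have habs : (0:ℝ) ≤ |t₁ - t₂| ^ ((1:ℝ)/2) := Real.rpow_nonneg (abs_nonneg _) _
  have hCle : ∀ r : ℝ, 0 ≤ r →
      (6 * K1 n + 2 * K2 n) * c * M * r ≤ ((6 * K1 n + 2 * K2 n) * c + 1) * M * r := by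
    intro r hr
    apply mul_le_mul_of_nonneg_right _ hr
    apply mul_le_mul_of_nonneg_right _ hM
    linarith
  rcases le_total t₂ t₁ with hle | hle
  · have hkey := key_est hn hc σ hA μ hμ M hμM ht₂.1 hle x
    rw [show |t₁ - t₂| = t₁ - t₂ from abs_of_nonneg (by linarith)]
    exact le_trans hkey (hCle _ (Real.rpow_nonneg (by linarith) _))
  · have hkey := key_est hn hc σ hA μ hμ M hμM ht₁.1 hle x
    rw [abs_sub_comm, show |t₁ - t₂| = t₂ - t₁ from by rw [abs_sub_comm]; exact abs_of_nonneg (by linarith)]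
    exact le_trans hkey (hCle _ (Real.rpow_nonneg (by linarith) _))
end

section
/- Assume σ is upper (n−1)-Ahlfors regular with constant c. Then there exists a constant C > 0, depending only on n and c, such that ∫_{ℝⁿ} S_n(s, x−y) dσ(y) ≤ C·s^{−1/2} for every s > 0 and every x ∈ ℝⁿ. -/
open Real MeasureTheory

set_option maxHeartbeats 1000000 in
lemma summable_aux (m : ℕ) :
    Summable (fun k : ℕ => ((k : ℝ) + 1) ^ m * Real.exp (-(k : ℝ) ^ 2 / 4)) := by
  have hrlt : ‖Real.exp (-(1 : ℝ) / 4)‖ < 1 := by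
    rw [Real.norm_eq_abs, abs_of_pos (Real.exp_pos _)]
    exact Real.exp_lt_one_iff.mpr (by norm_num)
  have h1 : Summable (fun k : ℕ => (k : ℝ) ^ m * Real.exp (-(1 : ℝ) / 4) ^ k) :=
    summable_pow_mul_geometric_of_norm_lt_one m hrlt
  have h2 : Summable (fun k : ℕ => ((k + 1 : ℕ) : ℝ) ^ m * Real.exp (-(1 : ℝ) / 4) ^ (k + 1)) :=
    (summable_nat_add_iff 1).mpr h1
  have h3 : Summable (fun k : ℕ => ((k : ℝ) + 1) ^ m * Real.exp (-(1 : ℝ) / 4) ^ k) := by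
    have h4 := h2.mul_left (Real.exp (-(1 : ℝ) / 4))⁻¹
    refine h4.congr fun k => ?_
    have hne : Real.exp (-(1 : ℝ) / 4) ≠ 0 := (Real.exp_pos _).ne'
    push_cast
    rw [inv_mul_eq_iff_eq_mul₀ hne, pow_succ]
    ring
  refine Summable.of_nonneg_of_le (fun k => by positivity) (fun k => ?_) h3
  have hexp : Real.exp (-(k : ℝ) ^ 2 / 4) ≤ Real.exp (-(1 : ℝ) / 4) ^ k := by
    rw [← Real.exp_nat_mul, Real.exp_le_exp]
    have hk2 : (k : ℝ) ≤ (k : ℝ) ^ 2 := by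
      have h := Nat.le_self_pow (two_ne_zero) k
      exact_mod_cast h
    linarith
  exact mul_le_mul_of_nonneg_left hexp (by positivity)

/-- If the finite Borel measure `σ` is upper `(n−1)`-Ahlfors regular with constant `c`, then
there is a constant `C > 0`, depending only on `n` and `c`, such that
`∫ S_n(s, x−y) dσ(y) ≤ C·s^{−1/2}` for all `s > 0` and `x ∈ ℝⁿ`. -/
theorem integral_Sn_le (n : ℕ) (hn : 2 ≤ n) (c : ℝ) (hc : 0 < c) :
    ∃ C : ℝ, 0 < C ∧
      ∀ σ : Measure (EuclideanSpace ℝ (Fin n)), IsFiniteMeasure σ →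
      (∀ (x : EuclideanSpace ℝ (Fin n)) (r : ℝ), 0 < r →
        σ (Metric.closedBall x r) ≤ ENNReal.ofReal (c * r ^ (n - 1))) →
      ∀ s : ℝ, 0 < s → ∀ x : EuclideanSpace ℝ (Fin n),
        (∫ y, Sn n s (x - y) ∂σ) ≤ C * s ^ (-(1 : ℝ) / 2) := by
  have hπ : (0 : ℝ) < 4 * Real.pi := by positivity
  have hsum := summable_aux (n - 1)
  set M : ℝ := ∑' k : ℕ, ((k : ℝ) + 1) ^ (n - 1) * Real.exp (-(k : ℝ) ^ 2 / 4) with hMdef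
  have hMpos : 0 < M :=
    Summable.tsum_pos hsum (fun k => by positivity) 0 (by norm_num)
  have hPpos : (0 : ℝ) < (4 * Real.pi) ^ (-(n : ℝ) / 2) := Real.rpow_pos_of_pos hπ _
  refine ⟨c * (4 * Real.pi) ^ (-(n : ℝ) / 2) * M, by positivity, ?_⟩
  intro σ hσ hAhl s hs x
  set t := Real.sqrt s with ht
  have htpos : 0 < t := Real.sqrt_pos.mpr hs
  set A : ℝ := (4 * Real.pi * s) ^ (-(n : ℝ) / 2) with hA
  have hApos : 0 < A := Real.rpow_pos_of_pos (by positivity) _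
  -- the key real computation
  have key : ∀ k : ℕ,
      A * Real.exp (-(k : ℝ) ^ 2 / 4) * (c * (((k : ℝ) + 1) * t) ^ (n - 1))
        = (c * (4 * Real.pi) ^ (-(n : ℝ) / 2) * M * s ^ (-(1 : ℝ) / 2)) *
            (((k : ℝ) + 1) ^ (n - 1) * Real.exp (-(k : ℝ) ^ 2 / 4)) / M := by
    intro k
    have e1 : A = (4 * Real.pi) ^ (-(n : ℝ) / 2) * s ^ (-(n : ℝ) / 2) := by
      rw [hA, Real.mul_rpow hπ.le hs.le]
    have e2 : t ^ (n - 1) = s ^ (((n : ℝ) - 1) / 2) := by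
      rw [ht, Real.sqrt_eq_rpow, ← Real.rpow_natCast (s ^ ((1 : ℝ) / 2)) (n - 1),
        ← Real.rpow_mul hs.le]
      congr 1
      rw [Nat.cast_sub (by omega)]
      push_cast
      ring
    have e3 : s ^ (-(n : ℝ) / 2) * s ^ (((n : ℝ) - 1) / 2) = s ^ (-(1 : ℝ) / 2) := by
      rw [← Real.rpow_add hs]
      congr 1
      ring
    calc A * Real.exp (-(k : ℝ) ^ 2 / 4) * (c * (((k : ℝ) + 1) * t) ^ (n - 1))
        = (c * (4 * Real.pi) ^ (-(n : ℝ) / 2) *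
            (((k : ℝ) + 1) ^ (n - 1) * Real.exp (-(k : ℝ) ^ 2 / 4))) *
            (s ^ (-(n : ℝ) / 2) * s ^ (((n : ℝ) - 1) / 2)) := by
          rw [e1, mul_pow, e2]; ring
      _ = _ := by
          rw [e3]
          field_simp
  -- rewrite the integrand
  have hSn : (fun y : EuclideanSpace ℝ (Fin n) => Sn n s (x - y))
      = fun y => A * Real.exp (-‖x - y‖ ^ 2 / (4 * s)) := by
    funext y
    simp [Sn, if_pos hs, hA]
  rw [hSn]
  have hmeas : AEStronglyMeasurable
      (fun y : EuclideanSpace ℝ (Fin n) => A * Real.exp (-‖x - y‖ ^ 2 / (4 * s))) σ := by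
    apply Continuous.aestronglyMeasurable
    fun_prop
  rw [integral_eq_lintegral_of_nonneg_ae
    (Filter.Eventually.of_forall fun y => by positivity) hmeas]
  apply ENNReal.toReal_le_of_le_ofReal (by positivity)
  calc ∫⁻ y, ENNReal.ofReal (A * Real.exp (-‖x - y‖ ^ 2 / (4 * s))) ∂σ
      ≤ ∫⁻ y, ∑' k : ℕ, (Metric.closedBall x (((k : ℝ) + 1) * t)).indicator
          (fun _ => ENNReal.ofReal (A * Real.exp (-(k : ℝ) ^ 2 / 4))) y ∂σ := by
        apply lintegral_mono
        intro y
        set k := ⌊‖x - y‖ / t⌋₊ with hk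
        have h1 : (k : ℝ) * t ≤ ‖x - y‖ := by
          have := Nat.floor_le (div_nonneg (norm_nonneg (x - y)) htpos.le)
          calc (k : ℝ) * t ≤ ‖x - y‖ / t * t := by
                exact mul_le_mul_of_nonneg_right this htpos.le
            _ = ‖x - y‖ := div_mul_cancel₀ _ htpos.ne'
        have h2 : ‖x - y‖ ≤ ((k : ℝ) + 1) * t := by
          have h := Nat.lt_floor_add_one (‖x - y‖ / t)
          have := (div_lt_iff₀ htpos).mp h
          linarith
        have hmem : y ∈ Metric.closedBall x (((k : ℝ) + 1) * t) := by
          rw [Metric.mem_closedBall, dist_comm, dist_eq_norm]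
          exact h2
        refine le_trans ?_ (ENNReal.le_tsum k)
        rw [Set.indicator_of_mem hmem]
        apply ENNReal.ofReal_le_ofReal
        apply mul_le_mul_of_nonneg_left _ hApos.le
        apply Real.exp_le_exp.mpr
        have hks : (k : ℝ) ^ 2 * s ≤ ‖x - y‖ ^ 2 := by
          have h4 : ((k : ℝ) * t) ^ 2 ≤ ‖x - y‖ ^ 2 :=
            pow_le_pow_left₀ (by positivity) h1 2
          have h5 : t ^ 2 = s := Real.sq_sqrt hs.le
          nlinarith
        rw [div_le_div_iff₀ (by positivity) (by positivity)]
        nlinarith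
    _ = ∑' k : ℕ, ENNReal.ofReal (A * Real.exp (-(k : ℝ) ^ 2 / 4)) *
          σ (Metric.closedBall x (((k : ℝ) + 1) * t)) := by
        rw [lintegral_tsum (fun k =>
          (measurable_const.indicator measurableSet_closedBall).aemeasurable)]
        congr 1
        funext k
        rw [lintegral_indicator_const measurableSet_closedBall]
    _ ≤ ∑' k : ℕ, ENNReal.ofReal (A * Real.exp (-(k : ℝ) ^ 2 / 4)) *
          ENNReal.ofReal (c * (((k : ℝ) + 1) * t) ^ (n - 1)) := by
        refine ENNReal.tsum_le_tsum fun k => ?_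
        exact mul_le_mul_right (hAhl x _ (by positivity)) _
    _ = ∑' k : ℕ, ENNReal.ofReal
          ((c * (4 * Real.pi) ^ (-(n : ℝ) / 2) * M * s ^ (-(1 : ℝ) / 2)) / M *
            (((k : ℝ) + 1) ^ (n - 1) * Real.exp (-(k : ℝ) ^ 2 / 4))) := by
        congr 1
        funext k
        rw [← ENNReal.ofReal_mul (by positivity)]
        congr 1
        rw [key k]
        ring
    _ = ENNReal.ofReal ((c * (4 * Real.pi) ^ (-(n : ℝ) / 2) * M * s ^ (-(1 : ℝ) / 2)) / M * M) := by
        rw [← ENNReal.ofReal_tsum_of_nonneg (fun k => by positivity) (hsum.mul_left _)]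
        congr 1
        rw [tsum_mul_left]
    _ ≤ ENNReal.ofReal (c * (4 * Real.pi) ^ (-(n : ℝ) / 2) * M * s ^ (-(1 : ℝ) / 2)) := by
        apply ENNReal.ofReal_le_ofReal
        rw [div_mul_cancel₀ _ hMpos.ne']
end
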